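/- arXiv:1104.1902 — 9 statements merged into one kernel-verified Lean document; each statement's English description precedes it below -/
import Mathlib

section
/- A numerical semigroup S with multiplicity m is m-irreducible if and only if its genus g(S) belongs to the set {m-1, m, ⌈(F(S)+1)/2⌉}. -/
/-- A numerical semigroup: a subset of ℕ containing 0, closed under addition,
with finite complement. -/
def IsNumSgp (S : Set ℕ) : Prop :=
  0 ∈ S ∧ (∀ a ∈ S, ∀ b ∈ S, a + b ∈ S) ∧ (Sᶜ).Finite

/-- Multiplicity: least positive element. -/
noncomputable def nsMult (S : Set ℕ) : ℕ := sInf {n | n ∈ S ∧ 0 < n}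

/-- Frobenius number: largest integer not in S. -/
noncomputable def nsFrob (S : Set ℕ) : ℕ := sSup Sᶜ

/-- Genus: number of gaps. -/
noncomputable def nsGenus (S : Set ℕ) : ℕ := Sᶜ.ncard

/-- Special gaps of S. -/
def nsSG (S : Set ℕ) : Set ℕ := {h | h ∉ S ∧ IsNumSgp (S ∪ {h})}

/-- Special gaps of S larger than m. -/
def nsSGm (m : ℕ) (S : Set ℕ) : Set ℕ := {h ∈ nsSG S | m < h}

/-- S is irreducible: not an intersection of two numerical semigroups properly containing it. -/
def nsIrr (S : Set ℕ) : Prop :=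
  ¬ ∃ T₁ T₂ : Set ℕ, IsNumSgp T₁ ∧ IsNumSgp T₂ ∧ S ⊂ T₁ ∧ S ⊂ T₂ ∧ S = T₁ ∩ T₂

/-- S is m-irreducible: not an intersection of two numerical semigroups of
multiplicity m properly containing it. -/
def nsMIrr (m : ℕ) (S : Set ℕ) : Prop :=
  ¬ ∃ T₁ T₂ : Set ℕ, IsNumSgp T₁ ∧ IsNumSgp T₂ ∧ nsMult T₁ = m ∧ nsMult T₂ = m ∧
      S ⊂ T₁ ∧ S ⊂ T₂ ∧ S = T₁ ∩ T₂

/-- Symmetric: irreducible with odd Frobenius number. -/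
def nsSym (S : Set ℕ) : Prop := nsIrr S ∧ Odd (nsFrob S)

/-- Pseudosymmetric: irreducible with even Frobenius number. -/
def nsPseudoSym (S : Set ℕ) : Prop := nsIrr S ∧ Even (nsFrob S)

/-- m-symmetric: m-irreducible with odd Frobenius number. -/
def nsMSym (m : ℕ) (S : Set ℕ) : Prop := nsMIrr m S ∧ Odd (nsFrob S)

/-- m-pseudosymmetric: m-irreducible with even Frobenius number. -/
def nsMPseudoSym (m : ℕ) (S : Set ℕ) : Prop := nsMIrr m S ∧ Even (nsFrob S)

/-- The numerical semigroup (submonoid) generated by a set of naturals. -/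
def nsGen (A : Set ℕ) : Set ℕ := (AddSubmonoid.closure A : Set ℕ)

/-- Apéry element: least element of S congruent to i mod m. -/
noncomputable def nsApery (S : Set ℕ) (m i : ℕ) : ℕ := sInf {s | s ∈ S ∧ s % m = i % m}


section Aux

lemma ns_infinite {S : Set ℕ} (hS : IsNumSgp S) : S.Infinite := by
  have h := hS.2.2.infinite_compl
  simpa using h

lemma ns_pos_nonempty {S : Set ℕ} (hS : IsNumSgp S) : {n | n ∈ S ∧ 0 < n}.Nonempty := by
  obtain ⟨x, hx, hx0⟩ := ((ns_infinite hS).diff (Set.finite_singleton 0)).nonempty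
  exact ⟨x, hx, Nat.pos_of_ne_zero (by simpa using hx0)⟩

lemma ns_union_gap {S : Set ℕ} {m h : ℕ} (hS : IsNumSgp S) (hm : nsMult S = m)
    (hmS : m ∈ S) (hmpos : 0 < m) (hhS : h ∉ S) (hmh : m < h) (h2 : h + h ∈ S)
    (hadd : ∀ s ∈ S, 0 < s → h + s ∈ S) :
    IsNumSgp (S ∪ {h}) ∧ nsMult (S ∪ {h}) = m ∧ S ⊂ S ∪ {h} := by
  refine ⟨⟨Or.inl hS.1, ?_, ?_⟩, ?_, ?_⟩
  · rintro a (ha | ha) b (hb | hb)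
    · exact Or.inl (hS.2.1 a ha b hb)
    · simp only [Set.mem_singleton_iff] at hb; subst hb
      rcases Nat.eq_zero_or_pos a with h0 | h0
      · subst h0; simp only [Nat.zero_add]; exact Or.inr rfl
      · exact Or.inl (by rw [Nat.add_comm]; exact hadd a ha h0)
    · simp only [Set.mem_singleton_iff] at ha; subst ha
      rcases Nat.eq_zero_or_pos b with h0 | h0
      · subst h0; exact Or.inr rfl
      · exact Or.inl (hadd b hb h0)
    · simp only [Set.mem_singleton_iff] at ha hb; subst ha; subst hb; exact Or.inl h2
  · exact hS.2.2.subset (Set.compl_subset_compl.mpr Set.subset_union_left)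
  · unfold nsMult
    apply le_antisymm
    · exact Nat.sInf_le ⟨Or.inl hmS, hmpos⟩
    · refine le_csInf ⟨m, Or.inl hmS, hmpos⟩ ?_
      rintro n ⟨hn | hn, hn0⟩
      · have : nsMult S ≤ n := Nat.sInf_le ⟨hn, hn0⟩
        omega
      · simp only [Set.mem_singleton_iff] at hn; omega
  · rw [Set.union_singleton]; exact Set.ssubset_insert hhS

lemma ns_extract {S T : Set ℕ} {m : ℕ} (hS : IsNumSgp S) (hT : IsNumSgp T)
    (hTm : nsMult T = m) (hmS : m ∈ S) (hsub : S ⊂ T) :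
    ∃ h, h ∉ S ∧ h ∈ T ∧ m < h ∧ h + h ∈ S ∧ ∀ s ∈ S, 0 < s → h + s ∈ S := by
  have hfin : (T \ S).Finite := hS.2.2.subset (fun x hx => hx.2)
  have hnon : (T \ S).Nonempty := Set.nonempty_of_ssubset hsub
  set h := sSup (T \ S) with hh
  have hmem : h ∈ T \ S := Nat.sSup_mem hnon hfin.bddAbove
  have hmax : ∀ x ∈ T \ S, x ≤ h := fun x hx => le_csSup hfin.bddAbove hx
  have hstep : ∀ x ∈ T, h < x → x ∈ S := by
    intro x hx hlt
    by_contra hxs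
    exact absurd (hmax x ⟨hx, hxs⟩) (by omega)
  have h0 : 0 < h := Nat.pos_of_ne_zero (fun h0 => hmem.2 (h0 ▸ hS.1))
  have hmh : m < h := by
    have hle : m ≤ h := by
      have := Nat.sInf_le (s := {n | n ∈ T ∧ 0 < n}) ⟨hmem.1, h0⟩
      unfold nsMult at hTm; omega
    rcases hle.lt_or_eq with hc | hc
    · exact hc
    · exact absurd (hc ▸ hmS) hmem.2
  refine ⟨h, hmem.2, hmem.1, hmh, ?_, ?_⟩
  · exact hstep _ (hT.2.1 h hmem.1 h hmem.1) (by omega)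
  · intro s hs hs0
    exact hstep _ (hT.2.1 h hmem.1 s (hsub.1 hs)) (by omega)

end Aux

/-- S with multiplicity m is m-irreducible iff
g(S) ∈ {m-1, m, ⌈(F(S)+1)/2⌉}. -/
theorem stmt1 (m : ℕ) (S : Set ℕ) (hS : IsNumSgp S) (hm : nsMult S = m) :
    nsMIrr m S ↔ nsGenus S ∈ ({m - 1, m, (nsFrob S + 2) / 2} : Set ℕ) := by
  classical
  by_cases hne : Sᶜ.Nonempty
  case neg =>
    rw [Set.not_nonempty_iff_eq_empty] at hne
    have hall : ∀ x : ℕ, x ∈ S := by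
      intro x; by_contra hx
      exact absurd (hne ▸ hx : x ∈ (∅ : Set ℕ)) (Set.notMem_empty x)
    have hm1 : m = 1 := by
      have h1 : nsMult S ≤ 1 := Nat.sInf_le ⟨hall 1, one_pos⟩
      have h2 : 0 < nsMult S := (Nat.sInf_mem (ns_pos_nonempty hS)).2
      omega
    have hg0 : nsGenus S = 0 := by rw [nsGenus, hne, Set.ncard_empty]
    constructor
    · intro _; left; omega
    · rintro _ ⟨T₁, T₂, _, _, _, _, hs₁, _⟩
      exact (Set.ssubset_def.mp hs₁).2 (fun x _ => hall x)
  case pos =>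
    have hSfin := hS.2.2
    have haddS := hS.2.1
    have h0S := hS.1
    set F := nsFrob S with hFdef
    have hFmem : F ∉ S := Nat.sSup_mem hne hSfin.bddAbove
    have hFle : ∀ x, x ∉ S → x ≤ F := fun x hx => le_csSup hSfin.bddAbove hx
    have hFgt : ∀ x, F < x → x ∈ S := by
      intro x hx; by_contra h; exact absurd (hFle x h) (by omega)
    have hFpos : 0 < F := Nat.pos_of_ne_zero (fun h0 => hFmem (h0 ▸ h0S))
    have hmmem' := Nat.sInf_mem (ns_pos_nonempty hS)
    have hmmem : m ∈ S := by rw [← hm]; exact hmmem'.1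
    have hmpos : 0 < m := by rw [← hm]; exact hmmem'.2
    have hmmin : ∀ n ∈ S, 0 < n → m ≤ n := by
      intro n hn hn0
      have : nsMult S ≤ n := Nat.sInf_le ⟨hn, hn0⟩
      omega
    set G : Finset ℕ := (Finset.Icc 0 F).filter (fun x => x ∉ S) with hGdef
    have hGmem : ∀ x, x ∈ G ↔ (x ≤ F ∧ x ∉ S) := by
      intro x
      simp only [hGdef, Finset.mem_filter, Finset.mem_Icc, Nat.zero_le, true_and]
    have hGcard : G.card = nsGenus S := by
      have hcoe : Sᶜ = ↑G := by
        ext x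
        rw [Set.mem_compl_iff, Finset.mem_coe, hGmem]
        exact ⟨fun h => ⟨hFle x h, h⟩, fun h => h.2⟩
      rw [nsGenus, hcoe, Set.ncard_coe_finset]
    set A : Finset ℕ := (Finset.Icc 0 F).filter (fun x => x ∉ S ∧ F - x ∉ S) with hAdef
    have hAmem : ∀ x, x ∈ A ↔ (x ≤ F ∧ x ∉ S ∧ F - x ∉ S) := by
      intro x
      simp only [hAdef, Finset.mem_filter, Finset.mem_Icc, Nat.zero_le, true_and]
    have hAcard : F + 1 + A.card = 2 * nsGenus S := by
      set G2 : Finset ℕ := (Finset.Icc 0 F).filter (fun x => F - x ∉ S) with hG2def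
      have hG2mem : ∀ x, x ∈ G2 ↔ (x ≤ F ∧ F - x ∉ S) := by
        intro x
        simp only [hG2def, Finset.mem_filter, Finset.mem_Icc, Nat.zero_le, true_and]
      have hbij : G2.card = G.card := by
        apply Finset.card_nbij' (i := fun x => F - x) (j := fun x => F - x)
        · intro a ha
          obtain ⟨h1, h2⟩ := (hG2mem a).mp ha
          exact (hGmem _).mpr ⟨by beta_reduce; omega, h2⟩
        · intro a ha
          obtain ⟨h1, h2⟩ := (hGmem a).mp ha
          exact (hG2mem _).mpr ⟨by beta_reduce; omega, by rwa [Nat.sub_sub_self h1]⟩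
        · intro a ha
          obtain ⟨h1, _⟩ := (hG2mem a).mp ha
          beta_reduce
          omega
        · intro a ha
          obtain ⟨h1, _⟩ := (hGmem a).mp ha
          beta_reduce
          omega
      have hunion : G ∪ G2 = Finset.Icc 0 F := by
        ext x
        simp only [Finset.mem_union, Finset.mem_Icc, Nat.zero_le, true_and]
        constructor
        · rintro (h | h)
          · exact ((hGmem x).mp h).1
          · exact ((hG2mem x).mp h).1
        · intro hx
          by_cases hxS : x ∈ S
          · refine Or.inr ((hG2mem x).mpr ⟨hx, fun hc => ?_⟩)
            have : x + (F - x) ∈ S := haddS x hxS _ hc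
            rw [show x + (F - x) = F by omega] at this
            exact hFmem this
          · exact Or.inl ((hGmem x).mpr ⟨hx, hxS⟩)
      have hinter : G ∩ G2 = A := by
        ext x
        simp only [Finset.mem_inter, hGmem, hG2mem, hAmem]
        tauto
      have hkey := Finset.card_union_add_card_inter G G2
      rw [hunion, hinter, hbij, hGcard, Nat.card_Icc] at hkey
      omega
    have hIccG : Finset.Icc 1 (m - 1) ⊆ G := by
      intro k hk
      rw [Finset.mem_Icc] at hk
      have hkS : k ∉ S := by
        intro hkmem
        have := hmmin k hkmem (by omega)
        omega
      exact (hGmem k).mpr ⟨hFle k hkS, hkS⟩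
    have hgm : m - 1 ≤ nsGenus S := by
      have := Finset.card_le_card hIccG
      rw [Nat.card_Icc] at this
      omega
    constructor
    · -- m-irreducible → genus condition
      intro hirr
      by_contra hg
      simp only [Set.mem_insert_iff, Set.mem_singleton_iff, not_or] at hg
      obtain ⟨hg1, hg2, hg3⟩ := hg
      apply hirr
      have hA2 : 2 ≤ A.card := by omega
      set B : Finset ℕ := A.filter (fun x => x + x ≠ F) with hBdef
      have hBmem : ∀ x, x ∈ B ↔ (x ≤ F ∧ x ∉ S ∧ F - x ∉ S ∧ x + x ≠ F) := by
        intro x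
        simp only [hBdef, Finset.mem_filter, hAmem]
        tauto
      have hBne : B.Nonempty := by
        obtain ⟨x, hx, y, hy, hxy⟩ := Finset.one_lt_card.mp hA2
        by_cases hxF : x + x = F
        · exact ⟨y, Finset.mem_filter.mpr ⟨hy, fun hyF => hxy (by omega)⟩⟩
        · exact ⟨x, Finset.mem_filter.mpr ⟨hx, hxF⟩⟩
      set h := B.max' hBne with hhdef
      obtain ⟨hhF, hhS, hhFS, hh2⟩ := (hBmem h).mp (B.max'_mem hBne)
      have hFh_B : F - h ∈ B := by
        refine (hBmem _).mpr ⟨by omega, hhFS, by rwa [Nat.sub_sub_self hhF], by omega⟩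
      have hFh_le : F - h ≤ h := B.le_max' _ hFh_B
      have h2F : F < h + h := by omega
      have h2S : h + h ∈ S := hFgt _ h2F
      have hhadd : ∀ s ∈ S, 0 < s → h + s ∈ S := by
        intro s hs hs0
        by_contra hcon
        have h1 : h + s ≤ F := hFle _ hcon
        have h2 : F - (h + s) ∉ S := by
          intro hmem2
          have hc : (F - (h + s)) + s ∈ S := haddS _ hmem2 _ hs
          rw [show (F - (h + s)) + s = F - h by omega] at hc
          exact hhFS hc
        have hmemB : h + s ∈ B := (hBmem _).mpr ⟨h1, hcon, h2, by omega⟩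
        have := B.le_max' _ hmemB
        omega
      have hhltF : h < F := by
        rcases Nat.lt_or_ge h F with hc | hc
        · exact hc
        · exfalso; apply hhFS
          rw [show F - h = 0 by omega]
          exact h0S
      -- F is a special gap
      have hFadd : ∀ s ∈ S, 0 < s → F + s ∈ S := fun s _ hs0 => hFgt _ (by omega)
      have hF2 : F + F ∈ S := hFgt _ (by omega)
      -- two gaps above m
      set Gm : Finset ℕ := G.filter (fun x => m < x) with hGmdef
      have hGmcard : 2 ≤ Gm.card := by
        have hsub : G ⊆ Finset.Icc 1 (m - 1) ∪ Gm := by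
          intro x hx
          obtain ⟨hxF, hxS⟩ := (hGmem x).mp hx
          have hx1 : 1 ≤ x := Nat.one_le_iff_ne_zero.mpr (fun h0 => hxS (h0 ▸ h0S))
          by_cases hxm : m < x
          · exact Finset.mem_union_right _ (Finset.mem_filter.mpr ⟨hx, hxm⟩)
          · have hxnem : x ≠ m := fun he => hxS (he ▸ hmmem)
            exact Finset.mem_union_left _ (Finset.mem_Icc.mpr ⟨hx1, by omega⟩)
        have hc1 := Finset.card_le_card hsub
        have hc2 := Finset.card_union_le (Finset.Icc 1 (m - 1)) Gm
        rw [Nat.card_Icc] at hc2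
        omega
      have hFGm : F ∈ Gm := by
        obtain ⟨x, hx⟩ := Finset.card_pos.mp (show 0 < Gm.card by omega)
        obtain ⟨hxG, hxm⟩ := Finset.mem_filter.mp hx
        have hxF := ((hGmem x).mp hxG).1
        exact Finset.mem_filter.mpr ⟨(hGmem F).mpr ⟨le_refl F, hFmem⟩, by omega⟩
      have hmF : m < F := (Finset.mem_filter.mp hFGm).2
      obtain ⟨x, hxe⟩ : (Gm.erase F).Nonempty := by
        apply Finset.card_pos.mp
        rw [Finset.card_erase_of_mem hFGm]
        omega
      have hxF : x ≠ F := (Finset.mem_erase.mp hxe).1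
      obtain ⟨hxG, hxm⟩ := Finset.mem_filter.mp (Finset.mem_erase.mp hxe).2
      obtain ⟨hxleF, hxS⟩ := (hGmem x).mp hxG
      -- build T₁ T₂
      obtain ⟨hTF, hmF', hsF⟩ := ns_union_gap hS hm hmmem hmpos hFmem hmF hF2 hFadd
      rcases Nat.lt_or_ge m h with hcase | hcase
      · -- use h and F
        obtain ⟨hTh, hmh', hsh⟩ := ns_union_gap hS hm hmmem hmpos hhS hcase h2S hhadd
        refine ⟨S ∪ {h}, S ∪ {F}, hTh, hTF, hmh', hmF', hsh, hsF, ?_⟩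
        ext y
        simp only [Set.mem_inter_iff, Set.mem_union, Set.mem_singleton_iff]
        constructor
        · intro hy; exact ⟨Or.inl hy, Or.inl hy⟩
        · rintro ⟨hy1 | hy1, hy2 | hy2⟩ <;> first | assumption | omega
      · -- h < m : use x and F
        have hhm : h < m := by
          rcases Nat.lt_or_ge h m with hc | hc
          · exact hc
          · exfalso; exact hhS (show h = m by omega ▸ hmmem)
        have hxadd : ∀ s ∈ S, 0 < s → x + s ∈ S := by
          intro s hs hs0
          have hms : m ≤ s := hmmin s hs hs0
          exact hFgt _ (by omega)
        have hx2 : x + x ∈ S := hFgt _ (by omega)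
        obtain ⟨hTx, hmx', hsx⟩ := ns_union_gap hS hm hmmem hmpos hxS hxm hx2 hxadd
        refine ⟨S ∪ {x}, S ∪ {F}, hTx, hTF, hmx', hmF', hsx, hsF, ?_⟩
        ext y
        simp only [Set.mem_inter_iff, Set.mem_union, Set.mem_singleton_iff]
        constructor
        · intro hy; exact ⟨Or.inl hy, Or.inl hy⟩
        · rintro ⟨hy1 | hy1, hy2 | hy2⟩ <;> first | assumption | omega
    · -- genus condition → m-irreducible
      rintro hg ⟨T₁, T₂, hT₁, hT₂, hm₁, hm₂, hs₁, hs₂, hint⟩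
      obtain ⟨h₁, h1S, h1T, h1m, h1two, h1add⟩ := ns_extract hS hT₁ hm₁ hmmem hs₁
      obtain ⟨h₂, h2S, h2T, h2m, h2two, h2add⟩ := ns_extract hS hT₂ hm₂ hmmem hs₂
      have hne12 : h₁ ≠ h₂ := by
        intro he
        apply h1S
        rw [hint]
        exact ⟨h1T, he ▸ h2T⟩
      have h1F : h₁ ≤ F := hFle _ h1S
      have h2F : h₂ ≤ F := hFle _ h2S
      simp only [Set.mem_insert_iff, Set.mem_singleton_iff] at hg
      rcases hg with hg | hg | hg
      · -- genus = m - 1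
        have hsub : insert h₁ (Finset.Icc 1 (m - 1)) ⊆ G := by
          intro y hy
          rcases Finset.mem_insert.mp hy with hy | hy
          · subst hy; exact (hGmem _).mpr ⟨h1F, h1S⟩
          · exact hIccG hy
        have hcard := Finset.card_le_card hsub
        rw [Finset.card_insert_of_notMem (by rw [Finset.mem_Icc]; omega),
          Nat.card_Icc] at hcard
        omega
      · -- genus = m
        have hsub : insert h₁ (insert h₂ (Finset.Icc 1 (m - 1))) ⊆ G := by
          intro y hy
          rcases Finset.mem_insert.mp hy with hy | hy
          · subst hy; exact (hGmem _).mpr ⟨h1F, h1S⟩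
          rcases Finset.mem_insert.mp hy with hy | hy
          · subst hy; exact (hGmem _).mpr ⟨h2F, h2S⟩
          · exact hIccG hy
        have hcard := Finset.card_le_card hsub
        rw [Finset.card_insert_of_notMem (by
            simp only [Finset.mem_insert, Finset.mem_Icc]; omega),
          Finset.card_insert_of_notMem (by rw [Finset.mem_Icc]; omega),
          Nat.card_Icc] at hcard
        omega
      · -- genus = (F + 2) / 2 : irreducible case
        have key : ∀ h', h' ∉ S → (∀ s ∈ S, 0 < s → h' + s ∈ S) → h' + h' ∈ S → h' = F := by
          intro h' hS' hadd' h2'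
          by_contra hne'
          have hle' : h' ≤ F := hFle _ hS'
          have hFh' : F - h' ∉ S := by
            intro hc
            have hc2 : h' + (F - h') ∈ S := hadd' _ hc (by omega)
            rw [show h' + (F - h') = F by omega] at hc2
            exact hFmem hc2
          have h2ne : h' + h' ≠ F := fun he => hFmem (he ▸ h2')
          have hA1 : h' ∈ A := (hAmem _).mpr ⟨hle', hS', hFh'⟩
          have hA2' : F - h' ∈ A := (hAmem _).mpr
            ⟨by omega, hFh', by rwa [Nat.sub_sub_self hle']⟩
          have hne2 : h' ≠ F - h' := by omega
          have hAcard2 : 2 ≤ A.card := Finset.one_lt_card.mpr ⟨h', hA1, F - h', hA2', hne2⟩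
          omega
        exact hne12 ((key h₁ h1S h1add h1two).trans (key h₂ h2S h2add h2two).symm)
end

section
/- A numerical semigroup S with multiplicity m is m-irreducible if and only if the set SG_m(S) of special gaps of S larger than m has at most one element; moreover SG_m(S) is empty if and only if S = {0, m, m+1, m+2, ...}. -/
lemma ns_mult_spec {S : Set ℕ} (hS : IsNumSgp S) : nsMult S ∈ S ∧ 0 < nsMult S := by
  have hinf : S.Infinite := by
    have := Set.Finite.infinite_compl hS.2.2
    simpa using this
  obtain ⟨n, hn, hpos⟩ := hinf.exists_gt 0
  have hne : {n | n ∈ S ∧ 0 < n}.Nonempty := ⟨n, ⟨hn, hpos⟩⟩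
  exact Nat.sInf_mem hne

lemma ns_mult_le {S : Set ℕ} {n : ℕ} (hn : n ∈ S) (hpos : 0 < n) : nsMult S ≤ n :=
  Nat.sInf_le (show n ∈ S ∧ 0 < n from ⟨hn, hpos⟩)

lemma mult_union {S : Set ℕ} {m h : ℕ} (hmS : m ∈ S) (hmpos : 0 < m)
    (hmmin : ∀ n ∈ S, 0 < n → m ≤ n) (hmh : m < h) : nsMult (S ∪ {h}) = m := by
  apply le_antisymm
  · exact Nat.sInf_le (show m ∈ S ∪ {h} ∧ 0 < m from ⟨Or.inl hmS, hmpos⟩)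
  · apply le_csInf ⟨m, show m ∈ S ∪ {h} ∧ 0 < m from ⟨Or.inl hmS, hmpos⟩⟩
    rintro n ⟨hn | hn, hpos⟩
    · exact hmmin n hn hpos
    · simp only [Set.mem_singleton_iff] at hn; omega

/-- the maximum of T \ S is a special gap of S larger than m -/
lemma max_diff_mem {S T : Set ℕ} {m : ℕ} (hS : IsNumSgp S) (hT : IsNumSgp T)
    (hmT : nsMult T = m) (hmS : m ∈ S) (hst : S ⊂ T) :
    sSup (T \ S) ∈ nsSGm m S ∧ sSup (T \ S) ∈ T := by
  set D := T \ S with hD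
  have hsub : S ⊆ T := hst.subset
  have hDfin : D.Finite := hS.2.2.subset (fun x hx => hx.2)
  have hDne : D.Nonempty := by
    obtain ⟨x, hxT, hxS⟩ := Set.exists_of_ssubset hst
    exact ⟨x, hxT, hxS⟩
  have hbdd : BddAbove D := hDfin.bddAbove
  have hmem : sSup D ∈ D := Nat.sSup_mem hDne hbdd
  set h := sSup D with hh
  have hhT : h ∈ T := hmem.1
  have hhS : h ∉ S := hmem.2
  have hpos : 0 < h := Nat.pos_of_ne_zero (fun h0 => hhS (h0 ▸ hS.1))
  have hmh : m < h := by
    have h1 : m ≤ h := hmT ▸ ns_mult_le hhT hpos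
    rcases h1.lt_or_eq with h2 | h2
    · exact h2
    · exact absurd (h2 ▸ hmS) hhS
  have key : ∀ x ∈ T, h < x → x ∈ S := by
    intro x hxT hlt
    by_contra hxS
    exact absurd (le_csSup hbdd ⟨hxT, hxS⟩) (not_le.mpr hlt)
  refine ⟨⟨⟨hhS, Or.inl hS.1, ?_, ?_⟩, hmh⟩, hhT⟩
  · rintro a (ha | ha) b (hb | hb)
    · exact Or.inl (hS.2.1 a ha b hb)
    · simp only [Set.mem_singleton_iff] at hb; subst hb
      rcases Nat.eq_zero_or_pos a with h0 | h0
      · subst h0; exact Or.inr (by simp)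
      · exact Or.inl (key _ (hT.2.1 a (hsub ha) h hhT) (by omega))
    · simp only [Set.mem_singleton_iff] at ha; subst ha
      rcases Nat.eq_zero_or_pos b with h0 | h0
      · subst h0; exact Or.inr (by simp)
      · exact Or.inl (key _ (hT.2.1 h hhT b (hsub hb)) (by omega))
    · simp only [Set.mem_singleton_iff] at ha hb; subst ha; subst hb
      exact Or.inl (key _ (hT.2.1 h hhT h hhT) (by omega))
  · exact hS.2.2.subset (by intro x hx; simp only [Set.mem_compl_iff, Set.mem_union] at *; tauto)

lemma ordinary_sgp {m : ℕ} (hmpos : 0 < m) :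
    IsNumSgp ({0} ∪ {n : ℕ | m ≤ n}) ∧ nsMult ({0} ∪ {n : ℕ | m ≤ n}) = m := by
  constructor
  · refine ⟨Or.inl rfl, ?_, ?_⟩
    · rintro a (ha | ha) b (hb | hb) <;>
        simp only [Set.mem_singleton_iff, Set.mem_setOf_eq] at ha hb <;>
        simp only [Set.mem_union, Set.mem_singleton_iff, Set.mem_setOf_eq] <;> omega
    · apply (Set.finite_Iio m).subset
      intro x hx
      simp only [Set.mem_compl_iff, Set.mem_union, Set.mem_singleton_iff,
        Set.mem_setOf_eq, not_or, not_le] at hx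
      exact hx.2
  · have hmmem : m ∈ {n | n ∈ ({0} ∪ {n : ℕ | m ≤ n}) ∧ 0 < n} :=
      ⟨Or.inr (Set.mem_setOf_eq ▸ le_rfl), hmpos⟩
    apply le_antisymm
    · exact Nat.sInf_le hmmem
    · apply le_csInf ⟨m, hmmem⟩
      rintro n ⟨hn | hn, hpos⟩ <;>
        simp only [Set.mem_singleton_iff, Set.mem_setOf_eq] at hn <;> omega


/-- S with multiplicity m is m-irreducible iff SG_m(S) has at most
one element; and SG_m(S) = ∅ iff S = {0, m, m+1, ...}. -/
theorem stmt2 (m : ℕ) (S : Set ℕ) (hS : IsNumSgp S) (hm : nsMult S = m) :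
    (nsMIrr m S ↔ (nsSGm m S).Subsingleton) ∧
    (nsSGm m S = ∅ ↔ S = {0} ∪ {n : ℕ | m ≤ n}) := by
  obtain ⟨hmS, hmpos⟩ : m ∈ S ∧ 0 < m := hm ▸ ns_mult_spec hS
  have hmmin : ∀ n ∈ S, 0 < n → m ≤ n := fun n hn hp => hm ▸ ns_mult_le hn hp
  have hSM : S ⊆ {0} ∪ {n : ℕ | m ≤ n} := by
    rintro n hn
    rcases Nat.eq_zero_or_pos n with h0 | h0
    · exact Or.inl h0
    · exact Or.inr (hmmin n hn h0)
  obtain ⟨hMsgp, hmM⟩ := ordinary_sgp hmpos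
  constructor
  · constructor
    · -- nsMIrr → Subsingleton
      intro hirr h1 hh1 h2 hh2
      by_contra hne
      apply hirr
      obtain ⟨⟨h1S, h1sgp⟩, h1m⟩ := hh1
      obtain ⟨⟨h2S, h2sgp⟩, h2m⟩ := hh2
      refine ⟨S ∪ {h1}, S ∪ {h2}, h1sgp, h2sgp,
        mult_union hmS hmpos hmmin h1m, mult_union hmS hmpos hmmin h2m, ?_, ?_, ?_⟩
      · rw [Set.union_singleton]; exact Set.ssubset_insert h1S
      · rw [Set.union_singleton]; exact Set.ssubset_insert h2S
      · ext n
        simp only [Set.mem_inter_iff, Set.mem_union, Set.mem_singleton_iff]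
        constructor
        · intro hn; exact ⟨Or.inl hn, Or.inl hn⟩
        · rintro ⟨ha | ha, hb | hb⟩
          · exact ha
          · exact ha
          · exact hb
          · exact absurd (ha.symm.trans hb) hne
    · -- Subsingleton → nsMIrr
      rintro hsub ⟨T1, T2, hT1, hT2, hm1, hm2, hs1, hs2, hse⟩
      obtain ⟨g1, g1T⟩ := max_diff_mem hS hT1 hm1 hmS hs1
      obtain ⟨g2, g2T⟩ := max_diff_mem hS hT2 hm2 hmS hs2
      have heq : sSup (T1 \ S) = sSup (T2 \ S) := hsub g1 g2
      have h2' : sSup (T1 \ S) ∈ T2 := by rw [heq]; exact g2T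
      have hsubS : T1 ∩ T2 ⊆ S := le_of_eq hse.symm
      exact g1.1.1 (hsubS ⟨g1T, h2'⟩)
  · constructor
    · intro hempty
      apply Set.Subset.antisymm hSM
      by_contra hns
      have hss : S ⊂ ({0} ∪ {n : ℕ | m ≤ n}) := lt_of_le_not_ge hSM (by
        intro hle
        exact hns hle)
      have := (max_diff_mem hS hMsgp hmM hmS hss).1
      rw [hempty] at this
      exact this
    · intro hSeq
      rw [Set.eq_empty_iff_forall_notMem]
      rintro h ⟨⟨hhS, _⟩, hmh⟩
      exact hhS (hSeq ▸ Or.inr (le_of_lt hmh))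
end

section
/- The map sending an integer vector x = (x_1, ..., x_{m-1}) to the numerical semigroup generated by {m, m·x_1 + 1, ..., m·x_{m-1} + (m-1)} is a bijection between the set of solutions of the system { x_i ≥ 1 for all i; x_i + x_j - x_{i+j} ≥ 0 whenever 1 ≤ i ≤ j ≤ m-1 and i+j ≤ m-1; x_i + x_j - x_{i+j-m} ≥ -1 whenever 1 ≤ i ≤ j ≤ m-1 and i+j > m } in ℕ^{m-1} and the set of numerical semigroups with multiplicity m. -/
namespace KunzAux

/-- The candidate semigroup from Kunz coordinates. -/
def T (m : ℕ) (x : ℕ → ℕ) : Set ℕ := {n | x (n % m) ≤ n / m}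

lemma mem_T {m : ℕ} (hm : 0 < m) {x : ℕ → ℕ} {n : ℕ} :
    n ∈ T m x ↔ m * x (n % m) + n % m ≤ n := by
  have hd : m * (n / m) + n % m = n := Nat.div_add_mod n m
  constructor
  · intro h
    have h2 : m * x (n % m) ≤ m * (n / m) := Nat.mul_le_mul_left m h
    omega
  · intro h
    have h2 : m * x (n % m) ≤ m * (n / m) := by omega
    exact Nat.le_of_mul_le_mul_left h2 hm

end KunzAux

namespace KunzAux

variable {m : ℕ} {x : ℕ → ℕ}

lemma T_zero (h0 : x 0 = 0) : 0 ∈ T m x := by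
  simp [T, h0]

lemma T_add (hm : 0 < m)
    (h2 : ∀ i j, 1 ≤ i → i ≤ j → j ≤ m - 1 → i + j ≤ m - 1 → x (i + j) ≤ x i + x j)
    (h3 : ∀ i j, 1 ≤ i → i ≤ j → j ≤ m - 1 → m < i + j → x (i + j - m) ≤ x i + x j + 1)
    (h0 : x 0 = 0)
    {a b : ℕ} (ha : a ∈ T m x) (hb : b ∈ T m x) : a + b ∈ T m x := by
  have h2' : ∀ i j, 1 ≤ i → 1 ≤ j → i + j ≤ m - 1 → x (i + j) ≤ x i + x j := by
    intro i j hi hj hij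
    rcases le_total i j with h | h
    · exact h2 i j hi h (by omega) hij
    · rw [add_comm i j, add_comm (x i) (x j)]
      exact h2 j i hj h (by omega) (by omega)
  have h3' : ∀ i j, 1 ≤ i → 1 ≤ j → i ≤ m - 1 → j ≤ m - 1 → m < i + j →
      x (i + j - m) ≤ x i + x j + 1 := by
    intro i j hi hj him hjm hij
    rcases le_total i j with h | h
    · exact h3 i j hi h hjm hij
    · rw [add_comm i j, add_comm (x i) (x j)]
      exact h3 j i hj h him (by omega)
  rw [mem_T hm] at ha hb ⊢
  set r := a % m with hr
  set s := b % m with hs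
  have hrm : r < m := Nat.mod_lt _ hm
  have hsm : s < m := Nat.mod_lt _ hm
  have hmod : (a + b) % m = (r + s) % m := by
    rw [Nat.add_mod]
  rcases lt_or_ge (r + s) m with hc | hc
  · -- no wrap
    have ht : (a + b) % m = r + s := by rw [hmod, Nat.mod_eq_of_lt hc]
    rw [ht]
    rcases Nat.eq_zero_or_pos r with hr0 | hr1
    · rw [hr0, zero_add]
      rw [hr0, h0] at ha
      omega
    · rcases Nat.eq_zero_or_pos s with hs0 | hs1
      · rw [hs0, add_zero]
        rw [hs0, h0] at hb
        omega
      · have hx : x (r + s) ≤ x r + x s := h2' r s hr1 hs1 (by omega)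
        have hx2 : m * x (r + s) ≤ m * x r + m * x s := by
          calc m * x (r + s) ≤ m * (x r + x s) := Nat.mul_le_mul_left m hx
            _ = m * x r + m * x s := Nat.mul_add m _ _
        omega
  · -- wrap around
    have hlt : r + s - m < m := by omega
    have ht : (a + b) % m = r + s - m := by
      rw [hmod, Nat.mod_eq_sub_mod hc, Nat.mod_eq_of_lt hlt]
    rw [ht]
    rcases Nat.eq_or_lt_of_le hc with heq | hgt
    · rw [← heq, Nat.sub_self, h0]
      omega
    · have hr1 : 1 ≤ r := by omega
      have hs1 : 1 ≤ s := by omega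
      have hx : x (r + s - m) ≤ x r + x s + 1 :=
        h3' r s hr1 hs1 (by omega) (by omega) hgt
      have hx2 : m * x (r + s - m) ≤ m * x r + m * x s + m := by
        calc m * x (r + s - m) ≤ m * (x r + x s + 1) := Nat.mul_le_mul_left m hx
          _ = m * x r + m * x s + m := by ring
      omega

lemma T_cofinite (hm : 0 < m) : ((T m x)ᶜ).Finite := by
  set N := Finset.sup (Finset.range m) x with hN
  apply Set.Finite.subset (Set.finite_Iio (m * (N + 1)))
  intro n hn
  simp only [Set.mem_compl_iff, T, Set.mem_setOf_eq, not_le] at hn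
  by_contra hge
  simp only [Set.mem_Iio, not_lt] at hge
  have h1 : x (n % m) ≤ N := Finset.le_sup (Finset.mem_range.mpr (Nat.mod_lt _ hm))
  have h2 : N + 1 ≤ n / m := (Nat.le_div_iff_mul_le hm).mpr (by rw [Nat.mul_comm]; omega)
  omega

end KunzAux

namespace KunzAux

variable {m : ℕ} {x : ℕ → ℕ}

/-- The generating set. -/
def G (m : ℕ) (x : ℕ → ℕ) : Set ℕ :=
  {m} ∪ {n : ℕ | ∃ i, 1 ≤ i ∧ i ≤ m - 1 ∧ n = m * x i + i}

lemma G_subset_T (hm : 0 < m) (h0 : x 0 = 0) : G m x ⊆ T m x := by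
  rintro n (hn | ⟨i, hi1, hi2, rfl⟩)
  · rcases hn with rfl
    rw [mem_T hm, Nat.mod_self, h0]
    omega
  · have him : i < m := by omega
    rw [mem_T hm]
    have : (m * x i + i) % m = i := by
      rw [Nat.mul_add_mod, Nat.mod_eq_of_lt him]
    rw [this]

lemma mul_mem_gen (hmem : (m : ℕ) ∈ G m x) (k : ℕ) : k * m ∈ nsGen (G m x) := by
  have hm' : (m : ℕ) ∈ AddSubmonoid.closure (G m x) := AddSubmonoid.subset_closure hmem
  have h := nsmul_mem hm' k
  rwa [nsmul_eq_mul] at h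

lemma gen_eq_T (hm : 0 < m)
    (h2 : ∀ i j, 1 ≤ i → i ≤ j → j ≤ m - 1 → i + j ≤ m - 1 → x (i + j) ≤ x i + x j)
    (h3 : ∀ i j, 1 ≤ i → i ≤ j → j ≤ m - 1 → m < i + j → x (i + j - m) ≤ x i + x j + 1)
    (h0 : x 0 = 0) : nsGen (G m x) = T m x := by
  apply le_antisymm
  · -- closure ⊆ T, since T is a submonoid containing G
    have : AddSubmonoid.closure (G m x) ≤
        { carrier := T m x,
          zero_mem' := T_zero h0,
          add_mem' := fun ha hb => T_add hm h2 h3 h0 ha hb } :=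
      AddSubmonoid.closure_le.mpr (G_subset_T hm h0)
    exact this
  · intro n hn
    have hmem : (m : ℕ) ∈ G m x := Or.inl rfl
    rw [mem_T hm] at hn
    set r := n % m with hr
    have hrm : r < m := Nat.mod_lt _ hm
    have hd : m * (n / m) + r = n := Nat.div_add_mod n m
    rcases Nat.eq_zero_or_pos r with hr0 | hr1
    · have : n = (n / m) * m := by rw [Nat.mul_comm]; omega
      rw [this]
      exact mul_mem_gen hmem _
    · have hgen : m * x r + r ∈ G m x := Or.inr ⟨r, hr1, by omega, rfl⟩
      have hq : x r ≤ n / m := by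
        have : m * x r ≤ m * (n / m) := by omega
        exact Nat.le_of_mul_le_mul_left this hm
      have hsum : (m * x r + r) + (n / m - x r) * m = n := by
        have : (n / m - x r) * m + x r * m = (n / m) * m := by
          rw [← Nat.add_mul]
          congr 1
          omega
        have hc1 : x r * m = m * x r := Nat.mul_comm _ _
        have hc2 : (n / m) * m = m * (n / m) := Nat.mul_comm _ _
        omega
      rw [← hsum]
      exact AddSubmonoid.add_mem _ (AddSubmonoid.subset_closure hgen)
        ((mul_mem_gen hmem (n / m - x r)))

lemma T_mult (hm : 0 < m)
    (h1 : ∀ i, 1 ≤ i → i ≤ m - 1 → 1 ≤ x i)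
    (h0 : x 0 = 0) : nsMult (T m x) = m := by
  have hmT : m ∈ T m x := by
    rw [mem_T hm, Nat.mod_self, h0]
    omega
  have hmP : m ∈ {n | n ∈ T m x ∧ 0 < n} := ⟨hmT, hm⟩
  apply le_antisymm (Nat.sInf_le hmP)
  have hlb : ∀ n ∈ {n | n ∈ T m x ∧ 0 < n}, m ≤ n := by
    rintro n ⟨hnT, hn0⟩
    by_contra hlt
    push_neg at hlt
    rw [mem_T hm, Nat.mod_eq_of_lt hlt] at hnT
    have := h1 n hn0 (by omega)
    have : m * 1 ≤ m * x n := Nat.mul_le_mul_left m this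
    omega
  exact hlb _ (Nat.sInf_mem ⟨m, hmP⟩)

lemma T_isNumSgp (hm : 0 < m)
    (h2 : ∀ i j, 1 ≤ i → i ≤ j → j ≤ m - 1 → i + j ≤ m - 1 → x (i + j) ≤ x i + x j)
    (h3 : ∀ i j, 1 ≤ i → i ≤ j → j ≤ m - 1 → m < i + j → x (i + j - m) ≤ x i + x j + 1)
    (h0 : x 0 = 0) : IsNumSgp (T m x) :=
  ⟨T_zero h0, fun _ ha _ hb => T_add hm h2 h3 h0 ha hb, T_cofinite hm⟩

end KunzAux

namespace KunzAux

variable {S : Set ℕ} {m : ℕ}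

lemma ns_pos_nonempty (hS : IsNumSgp S) : {n | n ∈ S ∧ 0 < n}.Nonempty := by
  have hinf : S.Infinite := by
    have := hS.2.2.infinite_compl
    rwa [compl_compl] at this
  obtain ⟨n, hn, hn0⟩ := (hinf.diff (Set.finite_singleton 0)).nonempty
  exact ⟨n, hn, Nat.pos_of_ne_zero (by simpa using hn0)⟩

lemma ns_mult_mem (hS : IsNumSgp S) (hmult : nsMult S = m) : m ∈ S := by
  have := Nat.sInf_mem (ns_pos_nonempty hS)
  rw [show sInf {n | n ∈ S ∧ 0 < n} = nsMult S from rfl, hmult] at this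
  exact this.1

lemma ns_mult_le (hmult : nsMult S = m) {n : ℕ} (hn : n ∈ S) (hn0 : 0 < n) : m ≤ n := by
  rw [← hmult]
  exact Nat.sInf_le ⟨hn, hn0⟩

lemma ns_mul_mem (hS : IsNumSgp S) (hmS : m ∈ S) (k : ℕ) : k * m ∈ S := by
  induction k with
  | zero => simpa using hS.1
  | succ k ih =>
    have := hS.2.1 _ ih _ hmS
    rwa [show (k + 1) * m = k * m + m by ring]

lemma apery_set_nonempty (hS : IsNumSgp S) (hm : 0 < m) (i : ℕ) :
    {s | s ∈ S ∧ s % m = i % m}.Nonempty := by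
  obtain ⟨B, hB⟩ := hS.2.2.bddAbove
  refine ⟨i + m * (B + 1), ?_, Nat.add_mul_mod_self_left i m (B + 1)⟩
  by_contra hc
  have h1 : i + m * (B + 1) ≤ B := hB hc
  have h2 : B + 1 ≤ m * (B + 1) := Nat.le_mul_of_pos_left _ hm
  omega

lemma apery_mem (hS : IsNumSgp S) (hm : 0 < m) (i : ℕ) :
    nsApery S m i ∈ S ∧ nsApery S m i % m = i % m :=
  Nat.sInf_mem (apery_set_nonempty hS hm i)

lemma apery_le (hS : IsNumSgp S) {i s : ℕ} (hs : s ∈ S) (hmod : s % m = i % m) :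
    nsApery S m i ≤ s :=
  Nat.sInf_le ⟨hs, hmod⟩

end KunzAux

namespace KunzAux

variable {S : Set ℕ} {m : ℕ}

/-- Kunz coordinates of a numerical semigroup. -/
noncomputable def kx (S : Set ℕ) (m : ℕ) : ℕ → ℕ :=
  fun i => if 1 ≤ i ∧ i ≤ m - 1 then nsApery S m i / m else 0

lemma kx_spec (hS : IsNumSgp S) (hm : 0 < m) {i : ℕ} (hi1 : 1 ≤ i) (hi2 : i ≤ m - 1) :
    nsApery S m i = m * kx S m i + i ∧ nsApery S m i ∈ S := by
  have him : i < m := by omega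
  obtain ⟨hw, hmod⟩ := apery_mem hS hm i
  rw [Nat.mod_eq_of_lt him] at hmod
  have hkx : kx S m i = nsApery S m i / m := if_pos ⟨hi1, hi2⟩
  have hd : m * (nsApery S m i / m) + nsApery S m i % m = nsApery S m i :=
    Nat.div_add_mod _ _
  rw [hmod] at hd
  exact ⟨by rw [hkx]; omega, hw⟩

lemma kx_zero {i : ℕ} (h : i = 0 ∨ m - 1 < i) : kx S m i = 0 := by
  unfold kx
  rcases h with rfl | h
  · simp
  · rw [if_neg]
    omega

lemma kx_pos (hS : IsNumSgp S) (hmult : nsMult S = m) (hm : 0 < m)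
    {i : ℕ} (hi1 : 1 ≤ i) (hi2 : i ≤ m - 1) : 1 ≤ kx S m i := by
  obtain ⟨heq, hw⟩ := kx_spec hS hm hi1 hi2
  have h0 : 0 < nsApery S m i := by omega
  have hle : m ≤ nsApery S m i := ns_mult_le hmult hw h0
  rcases Nat.eq_zero_or_pos (kx S m i) with h | h
  · rw [h, Nat.mul_zero] at heq
    omega
  · exact h

lemma kx_cond2 (hS : IsNumSgp S) (hm : 0 < m)
    {i j : ℕ} (hi : 1 ≤ i) (hij : i ≤ j) (hj : j ≤ m - 1) (hs : i + j ≤ m - 1) :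
    kx S m (i + j) ≤ kx S m i + kx S m j := by
  obtain ⟨hei, hwi⟩ := kx_spec hS hm hi (by omega)
  obtain ⟨hej, hwj⟩ := kx_spec hS hm (by omega : 1 ≤ j) hj
  obtain ⟨het, hwt⟩ := kx_spec hS hm (by omega : 1 ≤ i + j) hs
  have hsum : nsApery S m i + nsApery S m j ∈ S := hS.2.1 _ hwi _ hwj
  have hmod : (nsApery S m i + nsApery S m j) % m = (i + j) % m := by
    rw [Nat.add_mod, (apery_mem hS hm i).2, (apery_mem hS hm j).2, ← Nat.add_mod]
  have hle : nsApery S m (i + j) ≤ nsApery S m i + nsApery S m j :=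
    apery_le hS hsum hmod
  have hmul : m * kx S m (i + j) ≤ m * (kx S m i + kx S m j) := by
    rw [Nat.mul_add]
    omega
  exact Nat.le_of_mul_le_mul_left hmul hm

lemma kx_cond3 (hS : IsNumSgp S) (hm : 0 < m)
    {i j : ℕ} (hi : 1 ≤ i) (hij : i ≤ j) (hj : j ≤ m - 1) (hs : m < i + j) :
    kx S m (i + j - m) ≤ kx S m i + kx S m j + 1 := by
  obtain ⟨hei, hwi⟩ := kx_spec hS hm hi (by omega)
  obtain ⟨hej, hwj⟩ := kx_spec hS hm (by omega : 1 ≤ j) hj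
  obtain ⟨het, hwt⟩ := kx_spec hS hm (by omega : 1 ≤ i + j - m) (by omega)
  have hsum : nsApery S m i + nsApery S m j ∈ S := hS.2.1 _ hwi _ hwj
  have hmod : (nsApery S m i + nsApery S m j) % m = (i + j - m) % m := by
    rw [Nat.add_mod, (apery_mem hS hm i).2, (apery_mem hS hm j).2, ← Nat.add_mod,
      Nat.mod_eq_sub_mod (by omega : m ≤ i + j)]
  have hle : nsApery S m (i + j - m) ≤ nsApery S m i + nsApery S m j :=
    apery_le hS hsum hmod
  have hmul : m * kx S m (i + j - m) ≤ m * (kx S m i + kx S m j + 1) := by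
    rw [Nat.mul_add, Nat.mul_add, Nat.mul_one]
    omega
  exact Nat.le_of_mul_le_mul_left hmul hm

lemma T_kx_eq (hS : IsNumSgp S) (hmult : nsMult S = m) (hm : 0 < m) :
    T m (kx S m) = S := by
  have hmS : m ∈ S := ns_mult_mem hS hmult
  ext n
  rw [mem_T hm]
  set r := n % m with hr
  have hrm : r < m := Nat.mod_lt _ hm
  have hd : m * (n / m) + r = n := Nat.div_add_mod n m
  constructor
  · intro hn
    rcases Nat.eq_zero_or_pos r with hr0 | hr1
    · have : n = (n / m) * m := by rw [Nat.mul_comm]; omega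
      rw [this]
      exact ns_mul_mem hS hmS _
    · obtain ⟨heq, hw⟩ := kx_spec hS hm hr1 (by omega)
      have hq : kx S m r ≤ n / m := by
        have : m * kx S m r ≤ m * (n / m) := by omega
        exact Nat.le_of_mul_le_mul_left this hm
      have hsum : nsApery S m r + (n / m - kx S m r) * m = n := by
        have h1 : (n / m - kx S m r) * m + kx S m r * m = (n / m) * m := by
          rw [← Nat.add_mul]
          congr 1
          omega
        have hc1 : kx S m r * m = m * kx S m r := Nat.mul_comm _ _
        have hc2 : (n / m) * m = m * (n / m) := Nat.mul_comm _ _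
        omega
      rw [← hsum]
      exact hS.2.1 _ hw _ (ns_mul_mem hS hmS _)
  · intro hn
    rcases Nat.eq_zero_or_pos r with hr0 | hr1
    · rw [hr0, kx_zero (Or.inl rfl)]
      omega
    · obtain ⟨heq, _⟩ := kx_spec hS hm hr1 (by omega)
      have hle : nsApery S m r ≤ n := by
        apply apery_le hS hn
        rw [Nat.mod_eq_of_lt hrm]
      omega

end KunzAux

namespace KunzAux

lemma T_le_coord {m : ℕ} (hm : 0 < m) {x y : ℕ → ℕ} (h : T m x ⊆ T m y)
    {i : ℕ} (hi1 : 1 ≤ i) (hi2 : i ≤ m - 1) : y i ≤ x i := by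
  have him : i < m := by omega
  have hmod : (m * x i + i) % m = i := by
    rw [Nat.mul_add_mod, Nat.mod_eq_of_lt him]
  have hmem : m * x i + i ∈ T m x := by
    rw [mem_T hm, hmod]
  have hy := h hmem
  rw [mem_T hm, hmod] at hy
  have : m * y i ≤ m * x i := by omega
  exact Nat.le_of_mul_le_mul_left this hm

end KunzAux


/-- The Kunz map is a bijection between the solutions of the Kunz
system in ℕ^{m-1} (encoded as functions ℕ → ℕ vanishing outside {1,...,m-1})
and the numerical semigroups with multiplicity m. -/
theorem stmt3 (m : ℕ) (hm : 1 ≤ m) :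
    Set.BijOn
      (fun x : ℕ → ℕ =>
        nsGen ({m} ∪ {n : ℕ | ∃ i, 1 ≤ i ∧ i ≤ m - 1 ∧ n = m * x i + i}))
      {x : ℕ → ℕ |
        (∀ i, 1 ≤ i → i ≤ m - 1 → 1 ≤ x i) ∧
        (∀ i j, 1 ≤ i → i ≤ j → j ≤ m - 1 → i + j ≤ m - 1 → x (i + j) ≤ x i + x j) ∧
        (∀ i j, 1 ≤ i → i ≤ j → j ≤ m - 1 → m < i + j → x (i + j - m) ≤ x i + x j + 1) ∧
        (∀ i, i = 0 ∨ m - 1 < i → x i = 0)}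
      {S : Set ℕ | IsNumSgp S ∧ nsMult S = m} := by
  have hm0 : 0 < m := hm
  refine ⟨?_, ?_, ?_⟩
  · -- MapsTo
    rintro x ⟨h1, h2, h3, h4⟩
    have h0 : x 0 = 0 := h4 0 (Or.inl rfl)
    have hg : nsGen (KunzAux.G m x) = KunzAux.T m x := KunzAux.gen_eq_T hm0 h2 h3 h0
    show IsNumSgp (nsGen (KunzAux.G m x)) ∧ nsMult (nsGen (KunzAux.G m x)) = m
    rw [hg]
    exact ⟨KunzAux.T_isNumSgp hm0 h2 h3 h0, KunzAux.T_mult hm0 h1 h0⟩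
  · -- InjOn
    rintro x ⟨h1x, h2x, h3x, h4x⟩ y ⟨h1y, h2y, h3y, h4y⟩ hxy
    have h0x : x 0 = 0 := h4x 0 (Or.inl rfl)
    have h0y : y 0 = 0 := h4y 0 (Or.inl rfl)
    have hT : KunzAux.T m x = KunzAux.T m y := by
      rw [← KunzAux.gen_eq_T hm0 h2x h3x h0x, ← KunzAux.gen_eq_T hm0 h2y h3y h0y]
      exact hxy
    funext i
    by_cases hi : 1 ≤ i ∧ i ≤ m - 1
    · exact le_antisymm (KunzAux.T_le_coord hm0 hT.ge hi.1 hi.2)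
        (KunzAux.T_le_coord hm0 hT.le hi.1 hi.2)
    · have hi' : i = 0 ∨ m - 1 < i := by omega
      rw [h4x i hi', h4y i hi']
  · -- SurjOn
    rintro S ⟨hS, hmult⟩
    refine ⟨KunzAux.kx S m, ⟨?_, ?_, ?_, ?_⟩, ?_⟩
    · exact fun i hi1 hi2 => KunzAux.kx_pos hS hmult hm0 hi1 hi2
    · exact fun i j hi hij hj hs => KunzAux.kx_cond2 hS hm0 hi hij hj hs
    · exact fun i j hi hij hj hs => KunzAux.kx_cond3 hS hm0 hi hij hj hs
    · exact fun i hi => KunzAux.kx_zero hi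
    · show nsGen (KunzAux.G m (KunzAux.kx S m)) = S
      rw [KunzAux.gen_eq_T hm0 (fun i j hi hij hj hs => KunzAux.kx_cond2 hS hm0 hi hij hj hs)
        (fun i j hi hij hj hs => KunzAux.kx_cond3 hS hm0 hi hij hj hs)
        (KunzAux.kx_zero (Or.inl rfl)),
        KunzAux.T_kx_eq hS hmult hm0]
end

section
/- Every 3-irreducible numerical semigroup is irreducible. -/
lemma aux_two_three (T : Set ℕ) (hc : ∀ a ∈ T, ∀ b ∈ T, a + b ∈ T)
    (h2 : 2 ∈ T) (h3 : 3 ∈ T) : ∀ n, 2 ≤ n → n ∈ T := by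
  intro n
  induction n using Nat.strong_induction_on with
  | _ n ih =>
    intro hn
    rcases lt_or_ge n 4 with hlt | hge
    · interval_cases n <;> assumption
    · have hmem : n - 2 ∈ T := ih (n - 2) (by omega) (by omega)
      have h' := hc _ hmem 2 h2
      have heqn : n - 2 + 2 = n := by omega
      rwa [heqn] at h'

lemma aux_caseB (S T₁ T₂ : Set ℕ) (h3S : 3 ∈ S) (h2S : 2 ∉ S)
    (h1 : IsNumSgp T₁) (h2 : IsNumSgp T₂)
    (hs1 : S ⊂ T₁) (hs2 : S ⊂ T₂) (heq : S = T₁ ∩ T₂)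
    (hno : ∀ x ∈ T₁, x ∉ S → x < 3) : False := by
  obtain ⟨w, hwT, hwS⟩ := Set.exists_of_ssubset hs1
  have hw3 : w < 3 := hno w hwT hwS
  have h0S : 0 ∈ S := by rw [heq]; exact ⟨h1.1, h2.1⟩
  have hw0 : w ≠ 0 := fun h0 => hwS (h0 ▸ h0S)
  have h3T1 : 3 ∈ T₁ := hs1.1 h3S
  have h2T1 : 2 ∈ T₁ := by
    rcases (show w = 1 ∨ w = 2 by omega) with rfl | rfl
    · simpa using h1.2.1 1 hwT 1 hwT
    · exact hwT
  -- every n ≥ 3 is in S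
  have hallS : ∀ n, 3 ≤ n → n ∈ S := by
    intro n hn
    have hnT : n ∈ T₁ := aux_two_three T₁ h1.2.1 h2T1 h3T1 n (by omega)
    by_contra hnS
    exact absurd (hno n hnT hnS) (by omega)
  -- witness in T₂ \ S
  obtain ⟨y, hyT, hyS⟩ := Set.exists_of_ssubset hs2
  have hy0 : y ≠ 0 := fun h0 => hyS (h0 ▸ h0S)
  have hy3 : y < 3 := by
    by_contra hy
    exact hyS (hallS y (by omega))
  have h2T2 : 2 ∈ T₂ := by
    rcases (show y = 1 ∨ y = 2 by omega) with rfl | rfl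
    · simpa using h2.2.1 1 hyT 1 hyT
    · exact hyT
  exact h2S (heq ▸ ⟨h2T1, h2T2⟩)

lemma aux_del (T : Set ℕ) (hT : IsNumSgp T) (h3 : 3 ∈ T) :
    IsNumSgp (T \ {1, 2}) ∧ nsMult (T \ {1, 2}) = 3 := by
  have hns : IsNumSgp (T \ {1, 2}) := by
    refine ⟨⟨hT.1, by simp⟩, ?_, ?_⟩
    · rintro a ⟨haT, ha⟩ b ⟨hbT, hb⟩
      have ha' : a ≠ 1 ∧ a ≠ 2 := by simpa using ha
      have hb' : b ≠ 1 ∧ b ≠ 2 := by simpa using hb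
      refine ⟨hT.2.1 a haT b hbT, ?_⟩
      simp only [Set.mem_insert_iff, Set.mem_singleton_iff, not_or]
      omega
    · have : (T \ {1, 2})ᶜ ⊆ Tᶜ ∪ {1, 2} := by
        intro x hx
        simp only [Set.mem_compl_iff, Set.mem_diff, not_and, not_not] at hx
        by_cases hxT : x ∈ T
        · exact Or.inr (hx hxT)
        · exact Or.inl hxT
      exact Set.Finite.subset (hT.2.2.union (by simp)) this
  refine ⟨hns, ?_⟩
  have h3m : 3 ∈ T \ ({1, 2} : Set ℕ) := ⟨h3, by simp⟩
  unfold nsMult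
  have hne : ({n | n ∈ T \ {1, 2} ∧ 0 < n}).Nonempty := ⟨3, h3m, by omega⟩
  have hle : sInf {n | n ∈ T \ {1, 2} ∧ 0 < n} ≤ 3 := Nat.sInf_le ⟨h3m, by omega⟩
  have hmem := Nat.sInf_mem hne
  obtain ⟨⟨_, hnot⟩, hpos⟩ := hmem
  simp only [Set.mem_insert_iff, Set.mem_singleton_iff, not_or] at hnot
  omega

/-- Every 3-irreducible numerical semigroup is irreducible. -/
theorem stmt5 (S : Set ℕ) (hS : IsNumSgp S) (hm : nsMult S = 3)
    (h : nsMIrr 3 S) : nsIrr S := by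
  rintro ⟨T₁, T₂, h1, h2, hs1, hs2, heq⟩
  -- basic facts about S
  have hSinf : S.Infinite := Set.Finite.infinite_compl hS.2.2 |>.mono (by simp) |>.mono le_rfl
  have hne : ({n | n ∈ S ∧ 0 < n}).Nonempty := by
    obtain ⟨n, hnS, hn0⟩ := hSinf.exists_gt 0
    exact ⟨n, hnS, hn0⟩
  have h3S : 3 ∈ S := by
    have := Nat.sInf_mem hne
    rw [show sInf {n | n ∈ S ∧ 0 < n} = 3 from hm] at this
    exact this.1
  have h1S : 1 ∉ S := by
    intro h1s
    have := Nat.sInf_le (show 1 ∈ {n | n ∈ S ∧ 0 < n} from ⟨h1s, by omega⟩)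
    rw [show sInf {n | n ∈ S ∧ 0 < n} = 3 from hm] at this
    omega
  have h2S : 2 ∉ S := by
    intro h2s
    have := Nat.sInf_le (show 2 ∈ {n | n ∈ S ∧ 0 < n} from ⟨h2s, by omega⟩)
    rw [show sInf {n | n ∈ S ∧ 0 < n} = 3 from hm] at this
    omega
  by_cases hA : ∃ x ∈ T₁, x ∉ S ∧ 3 ≤ x
  · by_cases hB : ∃ y ∈ T₂, y ∉ S ∧ 3 ≤ y
    · -- use T₁ \ {1,2} and T₂ \ {1,2}
      obtain ⟨x, hxT, hxS, hx3⟩ := hA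
      obtain ⟨y, hyT, hyS, hy3⟩ := hB
      obtain ⟨hns1, hmu1⟩ := aux_del T₁ h1 (hs1.1 h3S)
      obtain ⟨hns2, hmu2⟩ := aux_del T₂ h2 (hs2.1 h3S)
      have hsub1 : S ⊆ T₁ \ {1, 2} := by
        intro s hsS
        refine ⟨hs1.1 hsS, ?_⟩
        simp only [Set.mem_insert_iff, Set.mem_singleton_iff, not_or]
        exact ⟨fun e => h1S (e ▸ hsS), fun e => h2S (e ▸ hsS)⟩
      have hsub2 : S ⊆ T₂ \ {1, 2} := by
        intro s hsS
        refine ⟨hs2.1 hsS, ?_⟩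
        simp only [Set.mem_insert_iff, Set.mem_singleton_iff, not_or]
        exact ⟨fun e => h1S (e ▸ hsS), fun e => h2S (e ▸ hsS)⟩
      refine h ⟨T₁ \ {1, 2}, T₂ \ {1, 2}, hns1, hns2, hmu1, hmu2, ?_, ?_, ?_⟩
      · exact ⟨hsub1, fun hcon => hxS (hcon ⟨hxT, by simp only [Set.mem_insert_iff, Set.mem_singleton_iff, not_or]; omega⟩)⟩
      · exact ⟨hsub2, fun hcon => hyS (hcon ⟨hyT, by simp only [Set.mem_insert_iff, Set.mem_singleton_iff, not_or]; omega⟩)⟩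
      · apply Set.Subset.antisymm
        · exact Set.subset_inter hsub1 hsub2
        · rintro z ⟨⟨hz1, _⟩, ⟨hz2, _⟩⟩
          rw [heq]; exact ⟨hz1, hz2⟩
    · push_neg at hB
      exact aux_caseB S T₂ T₁ h3S h2S h2 h1 hs2 hs1 (by rw [heq, Set.inter_comm])
        (fun x hx hxS => by exact hB x hx hxS)
  · push_neg at hA
    exact aux_caseB S T₁ T₂ h3S h2S h1 h2 hs1 hs2 heq
      (fun x hx hxS => by exact hA x hx hxS)
end

section
/- Let S be a numerical semigroup with multiplicity 3 and Kunz-coordinates vector (x_1, x_2) ∈ ℕ². Then SG_3(S) = ∅ if x = (1,1); SG_3(S) = {3x_1 - 2} if 2x_1 ≥ x_2 + 2, x_1 ≥ 2 and 2x_2 ≤ x_1; SG_3(S) = {3x_2 - 1} if 2x_2 ≥ x_1 + 1, x_2 ≥ 2 and 2x_1 ≤ x_2 + 1; and SG_3(S) = {3x_1 - 2, 3x_2 - 1} if 2x_1 ≥ x_2 + 2, 2x_2 ≥ x_1 + 1 and x_1, x_2 ≥ 2. -/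
/-- description of SG_3(S) in terms of the Kunz coordinates. -/
theorem stmt6 (S : Set ℕ) (x1 x2 : ℕ) (hS : IsNumSgp S) (hm : nsMult S = 3)
    (h1 : nsApery S 3 1 = 3 * x1 + 1) (h2 : nsApery S 3 2 = 3 * x2 + 2) :
    (x1 = 1 ∧ x2 = 1 → nsSGm 3 S = ∅) ∧
    (2 * x1 ≥ x2 + 2 → x1 ≥ 2 → 2 * x2 ≤ x1 → nsSGm 3 S = {3 * x1 - 2}) ∧
    (2 * x2 ≥ x1 + 1 → x2 ≥ 2 → 2 * x1 ≤ x2 + 1 → nsSGm 3 S = {3 * x2 - 1}) ∧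
    (2 * x1 ≥ x2 + 2 → 2 * x2 ≥ x1 + 1 → x1 ≥ 2 → x2 ≥ 2 →
      nsSGm 3 S = {3 * x1 - 2, 3 * x2 - 1}) := by
  obtain ⟨h0, hadd, hfin⟩ := hS
  obtain ⟨B, hB⟩ := hfin.bddAbove
  have hBmem : ∀ n, B < n → n ∈ S := by
    intro n hn
    by_contra hc
    exact absurd (hB hc) (by omega)
  have hm' : sInf {n | n ∈ S ∧ 0 < n} = 3 := hm
  have hpos_ne : {n | n ∈ S ∧ 0 < n}.Nonempty := ⟨B + 1, hBmem _ (by omega), by omega⟩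
  have h3S : 3 ∈ S := (hm' ▸ Nat.sInf_mem hpos_ne).1
  have hmin : ∀ n ∈ S, 0 < n → 3 ≤ n := fun n hn hp => hm' ▸ Nat.sInf_le ⟨hn, hp⟩
  have h1' : sInf {s | s ∈ S ∧ s % 3 = 1 % 3} = 3 * x1 + 1 := h1
  have h2' : sInf {s | s ∈ S ∧ s % 3 = 2 % 3} = 3 * x2 + 2 := h2
  have hA1ne : {s | s ∈ S ∧ s % 3 = 1 % 3}.Nonempty :=
    ⟨3 * B + 4, hBmem _ (by omega), by omega⟩
  have hA2ne : {s | s ∈ S ∧ s % 3 = 2 % 3}.Nonempty :=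
    ⟨3 * B + 5, hBmem _ (by omega), by omega⟩
  have hw1 : 3 * x1 + 1 ∈ S := (h1' ▸ Nat.sInf_mem hA1ne).1
  have hw2 : 3 * x2 + 2 ∈ S := (h2' ▸ Nat.sInf_mem hA2ne).1
  have hle1 : ∀ s ∈ S, s % 3 = 1 → 3 * x1 + 1 ≤ s := fun s hs hmod =>
    h1' ▸ Nat.sInf_le ⟨hs, by omega⟩
  have hle2 : ∀ s ∈ S, s % 3 = 2 → 3 * x2 + 2 ≤ s := fun s hs hmod =>
    h2' ▸ Nat.sInf_le ⟨hs, by omega⟩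
  have h3k : ∀ k : ℕ, 3 * k ∈ S := by
    intro k
    induction k with
    | zero => simpa using h0
    | succ n ih =>
      have := hadd _ ih _ h3S
      have he : 3 * (n + 1) = 3 * n + 3 := by ring
      rw [he]
      exact this
  have memS : ∀ n : ℕ, n ∈ S ↔
      (n % 3 = 0 ∨ (n % 3 = 1 ∧ 3 * x1 + 1 ≤ n) ∨ (n % 3 = 2 ∧ 3 * x2 + 2 ≤ n)) := by
    intro n
    constructor
    · intro hn
      have hmod : n % 3 = 0 ∨ n % 3 = 1 ∨ n % 3 = 2 := by omega
      rcases hmod with hmod | hmod | hmod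
      · exact Or.inl hmod
      · exact Or.inr (Or.inl ⟨hmod, hle1 n hn hmod⟩)
      · exact Or.inr (Or.inr ⟨hmod, hle2 n hn hmod⟩)
    · rintro (hmod | ⟨hmod, hle⟩ | ⟨hmod, hle⟩)
      · obtain ⟨k, rfl⟩ : ∃ k, n = 3 * k := ⟨n / 3, by omega⟩
        exact h3k k
      · have he : n = (3 * x1 + 1) + 3 * ((n - (3 * x1 + 1)) / 3) := by omega
        rw [he]
        exact hadd _ hw1 _ (h3k _)
      · have he : n = (3 * x2 + 2) + 3 * ((n - (3 * x2 + 2)) / 3) := by omega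
        rw [he]
        exact hadd _ hw2 _ (h3k _)
  have h1notS : (1 : ℕ) ∉ S := fun h => by have := hmin 1 h one_pos; omega
  have h2notS : (2 : ℕ) ∉ S := fun h => by have := hmin 2 h two_pos; omega
  have hx1 : 1 ≤ x1 := by
    by_contra hc
    have : x1 = 0 := by omega
    rw [this] at hw1
    simpa using absurd hw1 h1notS
  have hx2 : 1 ≤ x2 := by
    by_contra hc
    have : x2 = 0 := by omega
    rw [this] at hw2
    simpa using absurd hw2 h2notS
  have hc1 : x2 ≤ 2 * x1 := by
    have hsum : (3 * x1 + 1) + (3 * x1 + 1) ∈ S := hadd _ hw1 _ hw1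
    rw [memS] at hsum
    omega
  have hc2 : x1 ≤ 2 * x2 + 1 := by
    have hsum : (3 * x2 + 2) + (3 * x2 + 2) ∈ S := hadd _ hw2 _ hw2
    rw [memS] at hsum
    omega
  have char : ∀ n : ℕ, n ∈ nsSGm 3 S ↔
      ((n = 3 * x1 - 2 ∧ 2 ≤ x1 ∧ x2 + 2 ≤ 2 * x1) ∨
       (n = 3 * x2 - 1 ∧ 2 ≤ x2 ∧ x1 + 1 ≤ 2 * x2)) := by
    intro n
    constructor
    · rintro ⟨⟨hnot, h0', hadd', hfin'⟩, hgt⟩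
      have hn3 : n + 3 ∈ S := by
        have hmem : n + 3 ∈ S ∪ {n} := hadd' n (Or.inr rfl) 3 (Or.inl h3S)
        rcases hmem with hs | hs
        · exact hs
        · simp only [Set.mem_singleton_iff] at hs; omega
      have h2n : n + n ∈ S := by
        have hmem : n + n ∈ S ∪ {n} := hadd' n (Or.inr rfl) n (Or.inr rfl)
        rcases hmem with hs | hs
        · exact hs
        · simp only [Set.mem_singleton_iff] at hs; omega
      rw [memS] at hn3 h2n
      have hnot' : ¬ (n % 3 = 0 ∨ (n % 3 = 1 ∧ 3 * x1 + 1 ≤ n) ∨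
          (n % 3 = 2 ∧ 3 * x2 + 2 ≤ n)) := fun hc => hnot ((memS n).2 hc)
      omega
    · intro hcase
      refine ⟨⟨?_, Or.inl h0, ?_, ?_⟩, ?_⟩
      · rw [memS]; omega
      · intro a ha b hb
        rcases ha with ha | ha
        · rcases hb with hb | hb
          · exact Or.inl (hadd a ha b hb)
          · simp only [Set.mem_singleton_iff] at hb
            subst hb
            by_cases hz : a = 0
            · subst hz; exact Or.inr (by simp)
            · left
              have ha3 : 3 ≤ a := hmin a ha (by omega)
              rw [memS] at ha ⊢
              omega
        · simp only [Set.mem_singleton_iff] at ha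
          subst ha
          rcases hb with hb | hb
          · by_cases hz : b = 0
            · subst hz; exact Or.inr (by simp)
            · left
              have hb3 : 3 ≤ b := hmin b hb (by omega)
              rw [memS] at hb ⊢
              omega
          · simp only [Set.mem_singleton_iff] at hb
            subst hb
            left
            rw [memS]
            omega
      · exact Set.Finite.subset hfin (Set.compl_subset_compl.mpr Set.subset_union_left)
      · omega
  refine ⟨?_, ?_, ?_, ?_⟩
  · rintro ⟨hx1', hx2'⟩
    ext n
    rw [char n]
    simp only [Set.mem_empty_iff_false, iff_false]
    omega
  · intro c1 c2 c3
    ext n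
    rw [char n]
    simp only [Set.mem_singleton_iff]
    omega
  · intro c1 c2 c3
    ext n
    rw [char n]
    simp only [Set.mem_singleton_iff]
    omega
  · intro c1 c2 c3 c4
    ext n
    rw [char n]
    simp only [Set.mem_insert_iff, Set.mem_singleton_iff]
    omega
end

section
/- A numerical semigroup S with multiplicity 3 and Kunz-coordinates vector (x_1, x_2) ∈ ℕ² is irreducible if and only if one of the following holds: (1) x_1 = x_2 = 1; (2) 2x_1 ≥ x_2 + 2 and 2x_2 ≤ x_1; (3) 2x_2 ≥ x_1 + 1 and 2x_1 ≤ x_2 + 1. -/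
/-- The multiplicity-3 set with Kunz-type parameters. -/
def K3 (y1 y2 : ℕ) : Set ℕ :=
  {s | s % 3 = 0 ∨ (s % 3 = 1 ∧ 3 * y1 + 1 ≤ s) ∨ (s % 3 = 2 ∧ 3 * y2 + 2 ≤ s)}

lemma K3_sgp {y1 y2 : ℕ} (hc1 : y2 ≤ 2 * y1) (hc2 : y1 ≤ 2 * y2 + 1) :
    IsNumSgp (K3 y1 y2) := by
  refine ⟨by simp [K3], ?_, ?_⟩
  · intro a ha b hb
    simp only [K3, Set.mem_setOf_eq] at *
    omega
  · apply Set.Finite.subset (Set.finite_Iio (3 * y1 + 3 * y2 + 3))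
    intro s hs
    simp only [K3, Set.mem_compl_iff, Set.mem_setOf_eq] at hs
    simp only [Set.mem_Iio]
    omega

/-- irreducibility of a multiplicity-3 numerical semigroup in
terms of its Kunz coordinates. -/
theorem stmt7 (S : Set ℕ) (x1 x2 : ℕ) (hS : IsNumSgp S) (hm : nsMult S = 3)
    (h1 : nsApery S 3 1 = 3 * x1 + 1) (h2 : nsApery S 3 2 = 3 * x2 + 2) :
    nsIrr S ↔
      (x1 = 1 ∧ x2 = 1) ∨
      (2 * x1 ≥ x2 + 2 ∧ 2 * x2 ≤ x1) ∨
      (2 * x2 ≥ x1 + 1 ∧ 2 * x1 ≤ x2 + 1) := by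
  obtain ⟨h0S, hcl, hfin⟩ := hS
  obtain ⟨B, hB⟩ := hfin.bddAbove
  have hlarge : ∀ n, B < n → n ∈ S := by
    intro n hn
    by_contra h
    exact absurd (hB h) (by omega)
  have hm' : sInf {n | n ∈ S ∧ 0 < n} = 3 := hm
  have h3S : 3 ∈ S := by
    have hne : {n | n ∈ S ∧ 0 < n}.Nonempty := ⟨B + 1, hlarge _ (by omega), by omega⟩
    have := Nat.sInf_mem hne
    rw [hm'] at this
    exact this.1
  have h1nS : 1 ∉ S := by
    intro h
    have := Nat.sInf_le (show 1 ∈ {n | n ∈ S ∧ 0 < n} from ⟨h, one_pos⟩)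
    omega
  have h2nS : 2 ∉ S := by
    intro h
    have := Nat.sInf_le (show 2 ∈ {n | n ∈ S ∧ 0 < n} from ⟨h, by omega⟩)
    omega
  have hmul3 : ∀ k, 3 * k ∈ S := by
    intro k
    induction k with
    | zero => simpa using h0S
    | succ n ih =>
      have h' : 3 * (n + 1) = 3 * n + 3 := by ring
      rw [h']
      exact hcl _ ih _ h3S
  have ha1 : sInf {s | s ∈ S ∧ s % 3 = 1 % 3} = 3 * x1 + 1 := h1
  have hA1ne : {s | s ∈ S ∧ s % 3 = 1 % 3}.Nonempty :=
    ⟨3 * B + 4, hlarge _ (by omega), by omega⟩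
  have hw1 : 3 * x1 + 1 ∈ S := by
    have := Nat.sInf_mem hA1ne
    rw [ha1] at this
    exact this.1
  have hlb1 : ∀ s ∈ S, s % 3 = 1 → 3 * x1 + 1 ≤ s := by
    intro s hs hmod
    have := Nat.sInf_le (show s ∈ {s | s ∈ S ∧ s % 3 = 1 % 3} from ⟨hs, by omega⟩)
    omega
  have ha2 : sInf {s | s ∈ S ∧ s % 3 = 2 % 3} = 3 * x2 + 2 := h2
  have hA2ne : {s | s ∈ S ∧ s % 3 = 2 % 3}.Nonempty :=
    ⟨3 * B + 5, hlarge _ (by omega), by omega⟩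
  have hw2 : 3 * x2 + 2 ∈ S := by
    have := Nat.sInf_mem hA2ne
    rw [ha2] at this
    exact this.1
  have hlb2 : ∀ s ∈ S, s % 3 = 2 → 3 * x2 + 2 ≤ s := by
    intro s hs hmod
    have := Nat.sInf_le (show s ∈ {s | s ∈ S ∧ s % 3 = 2 % 3} from ⟨hs, by omega⟩)
    omega
  have hx1 : 1 ≤ x1 := by
    by_contra h
    have hx0 : x1 = 0 := by omega
    rw [hx0] at hw1
    norm_num at hw1
    exact h1nS hw1
  have hx2 : 1 ≤ x2 := by
    by_contra h
    have hx0 : x2 = 0 := by omega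
    rw [hx0] at hw2
    norm_num at hw2
    exact h2nS hw2
  have hSK : S = K3 x1 x2 := by
    ext s
    simp only [K3, Set.mem_setOf_eq]
    constructor
    · intro hs
      have hm3 : s % 3 = 0 ∨ s % 3 = 1 ∨ s % 3 = 2 := by omega
      rcases hm3 with h | h | h
      · exact Or.inl h
      · exact Or.inr (Or.inl ⟨h, hlb1 s hs h⟩)
      · exact Or.inr (Or.inr ⟨h, hlb2 s hs h⟩)
    · intro hs
      rcases hs with h | ⟨h, hle⟩ | ⟨h, hle⟩
      · have h' : s = 3 * (s / 3) := by omega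
        rw [h']
        exact hmul3 _
      · have h' : s = (3 * x1 + 1) + 3 * ((s - (3 * x1 + 1)) / 3) := by omega
        rw [h']
        exact hcl _ hw1 _ (hmul3 _)
      · have h' : s = (3 * x2 + 2) + 3 * ((s - (3 * x2 + 2)) / 3) := by omega
        rw [h']
        exact hcl _ hw2 _ (hmul3 _)
  have hc1 : x2 ≤ 2 * x1 := by
    have hmem := hcl _ hw1 _ hw1
    have := hlb2 _ hmem (by omega)
    omega
  have hc2 : x1 ≤ 2 * x2 + 1 := by
    have hmem := hcl _ hw2 _ hw2
    have := hlb1 _ hmem (by omega)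
    omega
  constructor
  · intro hirr
    by_contra hR
    have hkey : x2 + 2 ≤ 2 * x1 ∧ x1 + 1 ≤ 2 * x2 := by omega
    apply hirr
    refine ⟨K3 (x1 - 1) x2, K3 x1 (x2 - 1), K3_sgp (by omega) (by omega),
      K3_sgp (by omega) (by omega), ?_, ?_, ?_⟩
    · have hsub : S ⊆ K3 (x1 - 1) x2 := by
        rw [hSK]
        intro s hs
        simp only [K3, Set.mem_setOf_eq] at *
        omega
      rw [Set.ssubset_iff_of_subset hsub]
      refine ⟨3 * (x1 - 1) + 1, ?_, ?_⟩
      · simp only [K3, Set.mem_setOf_eq]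
        omega
      · rw [hSK]
        simp only [K3, Set.mem_setOf_eq]
        omega
    · have hsub : S ⊆ K3 x1 (x2 - 1) := by
        rw [hSK]
        intro s hs
        simp only [K3, Set.mem_setOf_eq] at *
        omega
      rw [Set.ssubset_iff_of_subset hsub]
      refine ⟨3 * (x2 - 1) + 2, ?_, ?_⟩
      · simp only [K3, Set.mem_setOf_eq]
        omega
      · rw [hSK]
        simp only [K3, Set.mem_setOf_eq]
        omega
    · rw [hSK]
      ext s
      simp only [K3, Set.mem_inter_iff, Set.mem_setOf_eq]
      omega
  · intro hR
    rintro ⟨T1, T2, hT1, hT2, hsub1, hsub2, hSeq⟩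
    have hgap : ∀ T : Set ℕ, IsNumSgp T → S ⊂ T →
        ∃ g, g ∈ T ∧ g ∉ S ∧ g + 3 ∈ S ∧ g + g ∈ S := by
      intro T hT hsub
      obtain ⟨hT0, hTcl, hTfin⟩ := hT
      have hGfin : (T \ S).Finite := hfin.subset (fun x hx => hx.2)
      have hGne : (T \ S).Nonempty := by
        obtain ⟨x, hxT, hxS⟩ := Set.exists_of_ssubset hsub
        exact ⟨x, hxT, hxS⟩
      obtain ⟨g, hgG, hgmax⟩ := Set.Finite.exists_maximalFor id _ hGfin hGne
      have hmax' : ∀ t ∈ T, g < t → t ∈ S := by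
        intro t ht hlt
        by_contra hts
        have h' : t ≤ g := hgmax (j := t) ⟨ht, hts⟩ (le_of_lt hlt)
        omega
      have hS_T : S ⊆ T := hsub.subset
      have hpos : 0 < g := by
        by_contra h
        have h0 : g = 0 := by omega
        exact hgG.2 (h0 ▸ h0S)
      exact ⟨g, hgG.1, hgG.2,
        hmax' _ (hTcl _ hgG.1 _ (hS_T h3S)) (by omega),
        hmax' _ (hTcl _ hgG.1 _ hgG.1) (by omega)⟩
    obtain ⟨g1, hg1T, hg1S, hg1a, hg1b⟩ := hgap T1 hT1 hsub1
    obtain ⟨g2, hg2T, hg2S, hg2a, hg2b⟩ := hgap T2 hT2 hsub2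
    have hne : g1 ≠ g2 := by
      intro he
      have hmem : g1 ∈ T1 ∩ T2 := ⟨hg1T, by rw [he]; exact hg2T⟩
      rw [← hSeq] at hmem
      exact hg1S hmem
    have hfact : ∀ g, g ∉ S → g + 3 ∈ S → g + g ∈ S →
        (g = 3 * x1 - 2 ∧ x2 + 2 ≤ 2 * x1) ∨ (g = 3 * x2 - 1 ∧ x1 + 1 ≤ 2 * x2) := by
      intro g hg hga hgb
      rw [hSK] at hg hga hgb
      simp only [K3, Set.mem_setOf_eq] at hg hga hgb
      omega
    rcases hfact g1 hg1S hg1a hg1b with ⟨he1, hi1⟩ | ⟨he1, hi1⟩ <;>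
      rcases hfact g2 hg2S hg2a hg2b with ⟨he2, hi2⟩ | ⟨he2, hi2⟩ <;>
      omega
end

section
/- Let h, d, k be positive integers with k ≤ 2 and gcd(d,3) = 1, and let S = ⟨3, 3h+d, ..., 3h+kd⟩ be the numerical semigroup generated by 3 together with the generalized arithmetic sequence 3h+d, ..., 3h+kd. Then S is irreducible if and only if k = 1, or k = 2 and h = 1. Moreover, if k = 1 then S is symmetric, and if k = 2 and h = 1 then S is pseudosymmetric. -/
lemma isNumSgp_union_single {S : Set ℕ} (hS : IsNumSgp S) (x : ℕ)
    (hstep : ∀ a ∈ S, a ≠ 0 → a + x ∈ S) (hxx : x + x ∈ S) : IsNumSgp (S ∪ {x}) := by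
  refine ⟨Or.inl hS.1, ?_, hS.2.2.subset (Set.compl_subset_compl.mpr Set.subset_union_left)⟩
  intro a ha b hb
  rcases (Set.mem_union _ _ _).mp ha with haS | hax
  · rcases (Set.mem_union _ _ _).mp hb with hbS | hbx
    · exact Or.inl (hS.2.1 a haS b hbS)
    · rw [Set.mem_singleton_iff] at hbx; subst hbx
      rcases eq_or_ne a 0 with rfl | h0
      · rw [zero_add]; exact Or.inr rfl
      · exact Or.inl (hstep a haS h0)
  · rw [Set.mem_singleton_iff] at hax; subst hax
    rcases (Set.mem_union _ _ _).mp hb with hbS | hbx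
    · rcases eq_or_ne b 0 with rfl | h0
      · rw [add_zero]; exact Or.inr rfl
      · rw [add_comm]; exact Or.inl (hstep b hbS h0)
    · rw [Set.mem_singleton_iff] at hbx; subst hbx
      exact Or.inl hxx

lemma exists_sg {S T : Set ℕ} (hS : IsNumSgp S) (hT : IsNumSgp T) (hst : S ⊂ T) :
    ∃ x, x ∈ nsSG S ∧ x ∈ T := by
  have hfin : (T \ S).Finite := hS.2.2.subset (fun y hy => hy.2)
  obtain ⟨x0, hx0T, hx0S⟩ := Set.exists_of_ssubset hst
  have hne : hfin.toFinset.Nonempty := ⟨x0, by simp [Set.mem_diff, hx0T, hx0S]⟩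
  set x := hfin.toFinset.max' hne with hxdef
  have hxmem : x ∈ T \ S := by
    have := hfin.toFinset.max'_mem hne
    simpa using this
  have hmax : ∀ y ∈ T \ S, y ≤ x := by
    intro y hy
    exact hfin.toFinset.le_max' y (by simpa using hy)
  have hxT : x ∈ T := hxmem.1
  have hxS : x ∉ S := hxmem.2
  have hxpos : 0 < x := Nat.pos_of_ne_zero (fun h => hxS (h ▸ hS.1))
  have key : ∀ a ∈ S, a ≠ 0 → a + x ∈ S := by
    intro a haS ha0
    have haT : a + x ∈ T := hT.2.1 a (hst.1 haS) x hxT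
    by_contra hnot
    have := hmax (a + x) ⟨haT, hnot⟩
    omega
  have hxx : x + x ∈ S := by
    have hT2 : x + x ∈ T := hT.2.1 x hxT x hxT
    by_contra hnot
    have := hmax (x + x) ⟨hT2, hnot⟩
    omega
  exact ⟨x, ⟨hxS, isNumSgp_union_single hS x key hxx⟩, hxT⟩

lemma irr_of_unique {S : Set ℕ} (hS : IsNumSgp S) (c : ℕ) (hc : c ∉ S)
    (hu : ∀ x ∈ nsSG S, x = c) : nsIrr S := by
  rintro ⟨T₁, T₂, h1, h2, hs1, hs2, heq⟩
  obtain ⟨x₁, hx₁, hxT₁⟩ := exists_sg hS h1 hs1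
  obtain ⟨x₂, hx₂, hxT₂⟩ := exists_sg hS h2 hs2
  rw [hu x₁ hx₁] at hxT₁
  rw [hu x₂ hx₂] at hxT₂
  exact hc (heq ▸ ⟨hxT₁, hxT₂⟩)

lemma mem_gen1 (h d : ℕ) (hd3 : d % 3 ≠ 0) (n : ℕ) :
    n ∈ nsGen {3, 3*h+d} ↔
      n % 3 = 0 ∨ (n % 3 = d % 3 ∧ 3*h+d ≤ n) ∨ (n % 3 = 2*d % 3 ∧ 2*(3*h+d) ≤ n) := by
  constructor
  · intro hn
    refine AddSubmonoid.closure_induction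
      (motive := fun m _ => m % 3 = 0 ∨ (m % 3 = d % 3 ∧ 3*h+d ≤ m) ∨ (m % 3 = 2*d % 3 ∧ 2*(3*h+d) ≤ m))
      ?_ ?_ ?_ hn
    · intro x hx
      simp only [Set.mem_insert_iff, Set.mem_singleton_iff] at hx
      rcases hx with rfl | rfl <;> omega
    · omega
    · intro a b _ _ ha hb; omega
  · intro hn
    have h3 : (3:ℕ) ∈ AddSubmonoid.closure ({3, 3*h+d} : Set ℕ) :=
      AddSubmonoid.subset_closure (by simp)
    have hm : (3*h+d:ℕ) ∈ AddSubmonoid.closure ({3, 3*h+d} : Set ℕ) :=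
      AddSubmonoid.subset_closure (by simp)
    have hstep : ∀ c : ℕ, c ∈ AddSubmonoid.closure ({3, 3*h+d} : Set ℕ) → ∀ t : ℕ,
        c + 3*t ∈ AddSubmonoid.closure ({3, 3*h+d} : Set ℕ) := by
      intro c hc t
      have h1 := AddSubmonoid.nsmul_mem _ h3 t
      have h2 : c + 3*t = c + t • 3 := by simp [smul_eq_mul]; ring
      rw [h2]; exact AddSubmonoid.add_mem _ hc h1
    show n ∈ AddSubmonoid.closure ({3, 3*h+d} : Set ℕ)
    rcases hn with h0 | ⟨h1, h2⟩ | ⟨h1, h2⟩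
    · have := hstep 0 (AddSubmonoid.zero_mem _) (n/3)
      rwa [show 0 + 3*(n/3) = n by omega] at this
    · have := hstep (3*h+d) hm ((n - (3*h+d))/3)
      rwa [show 3*h+d + 3*((n - (3*h+d))/3) = n by omega] at this
    · have h2m := AddSubmonoid.add_mem _ hm hm
      have := hstep ((3*h+d)+(3*h+d)) h2m ((n - 2*(3*h+d))/3)
      rwa [show (3*h+d)+(3*h+d) + 3*((n - 2*(3*h+d))/3) = n by omega] at this

lemma mem_gen2 (h d : ℕ) (hd3 : d % 3 ≠ 0) (n : ℕ) :
    n ∈ nsGen {3, 3*h+d, 3*h+2*d} ↔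
      n % 3 = 0 ∨ (n % 3 = d % 3 ∧ 3*h+d ≤ n) ∨ (n % 3 = 2*d % 3 ∧ 3*h+2*d ≤ n) := by
  constructor
  · intro hn
    refine AddSubmonoid.closure_induction
      (motive := fun m _ => m % 3 = 0 ∨ (m % 3 = d % 3 ∧ 3*h+d ≤ m) ∨ (m % 3 = 2*d % 3 ∧ 3*h+2*d ≤ m))
      ?_ ?_ ?_ hn
    · intro x hx
      simp only [Set.mem_insert_iff, Set.mem_singleton_iff] at hx
      rcases hx with rfl | rfl | rfl <;> omega
    · omega
    · intro a b _ _ ha hb; omega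
  · intro hn
    have h3 : (3:ℕ) ∈ AddSubmonoid.closure ({3, 3*h+d, 3*h+2*d} : Set ℕ) :=
      AddSubmonoid.subset_closure (by simp)
    have hm1 : (3*h+d:ℕ) ∈ AddSubmonoid.closure ({3, 3*h+d, 3*h+2*d} : Set ℕ) :=
      AddSubmonoid.subset_closure (by simp)
    have hm2 : (3*h+2*d:ℕ) ∈ AddSubmonoid.closure ({3, 3*h+d, 3*h+2*d} : Set ℕ) :=
      AddSubmonoid.subset_closure (by simp)
    have hstep : ∀ c : ℕ, c ∈ AddSubmonoid.closure ({3, 3*h+d, 3*h+2*d} : Set ℕ) → ∀ t : ℕ,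
        c + 3*t ∈ AddSubmonoid.closure ({3, 3*h+d, 3*h+2*d} : Set ℕ) := by
      intro c hc t
      have h1 := AddSubmonoid.nsmul_mem _ h3 t
      have h2 : c + 3*t = c + t • 3 := by simp [smul_eq_mul]; ring
      rw [h2]; exact AddSubmonoid.add_mem _ hc h1
    show n ∈ AddSubmonoid.closure ({3, 3*h+d, 3*h+2*d} : Set ℕ)
    rcases hn with h0 | ⟨h1, h2⟩ | ⟨h1, h2⟩
    · have := hstep 0 (AddSubmonoid.zero_mem _) (n/3)
      rwa [show 0 + 3*(n/3) = n by omega] at this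
    · have := hstep (3*h+d) hm1 ((n - (3*h+d))/3)
      rwa [show 3*h+d + 3*((n - (3*h+d))/3) = n by omega] at this
    · have := hstep (3*h+2*d) hm2 ((n - (3*h+2*d))/3)
      rwa [show 3*h+2*d + 3*((n - (3*h+2*d))/3) = n by omega] at this

lemma sg_eq {S : Set ℕ} (hS : IsNumSgp S) (h3S : (3:ℕ) ∈ S) {x : ℕ} (hx : x ∈ nsSG S) :
    x ∉ S ∧ x ≠ 0 ∧ x + 3 ∈ S ∧ x + x ∈ S := by
  obtain ⟨hxS, h0, hcl, hfin⟩ := hx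
  have hx0 : x ≠ 0 := fun e => hxS (e ▸ hS.1)
  have hmx : x ∈ S ∪ {x} := Or.inr rfl
  refine ⟨hxS, hx0, ?_, ?_⟩
  · have := hcl x hmx 3 (Or.inl h3S)
    rcases (Set.mem_union _ _ _).mp this with hm | hm
    · exact hm
    · rw [Set.mem_singleton_iff] at hm; omega
  · have := hcl x hmx x hmx
    rcases (Set.mem_union _ _ _).mp this with hm | hm
    · exact hm
    · rw [Set.mem_singleton_iff] at hm; omega


set_option maxHeartbeats 1000000 in
/-- irreducibility of a numerical semigroup generated by 3 and a
generalized arithmetic sequence. -/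
theorem stmt8 (h d k : ℕ) (hh : 1 ≤ h) (hd : 1 ≤ d) (hk1 : 1 ≤ k) (hk2 : k ≤ 2)
    (hgcd : Nat.gcd d 3 = 1)
    (S : Set ℕ)
    (hSdef : S = nsGen ({3} ∪ (fun i => 3 * h + i * d) '' Set.Icc 1 k)) :
    (nsIrr S ↔ k = 1 ∨ (k = 2 ∧ h = 1)) ∧
    (k = 1 → nsSym S) ∧
    (k = 2 → h = 1 → nsPseudoSym S) := by
  have hd3 : d % 3 ≠ 0 := by
    intro h0
    have h3 : (3:ℕ) ∣ Nat.gcd d 3 := Nat.dvd_gcd (Nat.dvd_of_mod_eq_zero h0) dvd_rfl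
    rw [hgcd] at h3; omega
  have hdd : d % 3 = 1 ∨ d % 3 = 2 := by omega
  have hk : k = 1 ∨ k = 2 := by omega
  rcases hk with rfl | rfl
  · -- k = 1
    have hA : ({3} ∪ (fun i => 3 * h + i * d) '' Set.Icc 1 1 : Set ℕ) = {3, 3*h+d} := by
      ext x
      simp only [Set.Icc_self, Set.image_singleton, Set.singleton_union, Set.mem_insert_iff,
        Set.mem_singleton_iff]
      omega
    rw [hA] at hSdef
    have hmem : ∀ n, n ∈ S ↔
        (n % 3 = 0 ∨ (n % 3 = d % 3 ∧ 3*h+d ≤ n) ∨ (n % 3 = 2*d % 3 ∧ 2*(3*h+d) ≤ n)) := by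
      intro n; rw [hSdef]; exact mem_gen1 h d hd3 n
    have hSfin : Sᶜ.Finite := (Set.finite_Iio (2*(3*h+d))).subset (by
      intro n hn
      simp only [Set.mem_compl_iff, hmem] at hn
      simp only [Set.mem_Iio]
      rcases hdd with h1 | h1 <;> omega)
    have hSsgp : IsNumSgp S := by
      refine ⟨?_, ?_, hSfin⟩
      · rw [hmem]; left; rfl
      · intro a ha b hb; rw [hmem] at *
        rcases hdd with h1 | h1 <;> omega
    have h3S : (3:ℕ) ∈ S := by rw [hmem]; omega
    have hcS : 2*(3*h+d) - 3 ∉ S := by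
      rw [hmem]; rcases hdd with h1 | h1 <;> omega
    have hirr : nsIrr S := by
      apply irr_of_unique hSsgp (2*(3*h+d) - 3) hcS
      intro x hx
      obtain ⟨hxS, _, hx3, hxx⟩ := sg_eq hSsgp h3S hx
      rw [hmem] at hxS hx3 hxx
      rcases hdd with h1 | h1 <;> omega
    have hFrob : nsFrob S = 2*(3*h+d) - 3 := by
      have hub : ∀ y ∈ Sᶜ, y ≤ 2*(3*h+d) - 3 := by
        intro y hy
        simp only [Set.mem_compl_iff, hmem] at hy
        rcases hdd with h1 | h1 <;> omega
      exact le_antisymm (csSup_le ⟨_, hcS⟩ hub) (le_csSup ⟨_, fun y hy => hub y hy⟩ hcS)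
    refine ⟨⟨fun _ => Or.inl rfl, fun _ => hirr⟩, fun _ => ⟨hirr, ?_⟩, fun h12 => by omega⟩
    rw [hFrob, Nat.odd_iff]; omega
  · -- k = 2
    have hA : ({3} ∪ (fun i => 3 * h + i * d) '' Set.Icc 1 2 : Set ℕ) = {3, 3*h+d, 3*h+2*d} := by
      ext x
      simp only [Set.mem_union, Set.mem_singleton_iff, Set.mem_image, Set.mem_Icc,
        Set.mem_insert_iff]
      constructor
      · rintro (rfl | ⟨i, ⟨h1i, h2i⟩, rfl⟩)
        · exact Or.inl rfl
        · interval_cases i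
          · right; left; ring
          · right; right; rfl
      · rintro (rfl | rfl | rfl)
        · exact Or.inl rfl
        · exact Or.inr ⟨1, ⟨le_refl 1, by omega⟩, by ring⟩
        · exact Or.inr ⟨2, ⟨by omega, le_refl 2⟩, rfl⟩
    rw [hA] at hSdef
    have hmem : ∀ n, n ∈ S ↔
        (n % 3 = 0 ∨ (n % 3 = d % 3 ∧ 3*h+d ≤ n) ∨ (n % 3 = 2*d % 3 ∧ 3*h+2*d ≤ n)) := by
      intro n; rw [hSdef]; exact mem_gen2 h d hd3 n
    have hSfin : Sᶜ.Finite := (Set.finite_Iio (3*h+2*d)).subset (by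
      intro n hn
      simp only [Set.mem_compl_iff, hmem] at hn
      simp only [Set.mem_Iio]
      rcases hdd with h1 | h1 <;> omega)
    have hSsgp : IsNumSgp S := by
      refine ⟨?_, ?_, hSfin⟩
      · rw [hmem]; left; rfl
      · intro a ha b hb; rw [hmem] at *
        rcases hdd with h1 | h1 <;> omega
    have h3S : (3:ℕ) ∈ S := by rw [hmem]; omega
    have hFS : 3*h+2*d - 3 ∉ S := by
      rw [hmem]; rcases hdd with h1 | h1 <;> omega
    have hFrob : nsFrob S = 3*h+2*d - 3 := by
      have hub : ∀ y ∈ Sᶜ, y ≤ 3*h+2*d - 3 := by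
        intro y hy
        simp only [Set.mem_compl_iff, hmem] at hy
        rcases hdd with h1 | h1 <;> omega
      exact le_antisymm (csSup_le ⟨_, hFS⟩ hub) (le_csSup ⟨_, fun y hy => hub y hy⟩ hFS)
    have hirr1 : h = 1 → nsIrr S := by
      intro h1
      apply irr_of_unique hSsgp (3*h+2*d - 3) hFS
      intro x hx
      obtain ⟨hxS, _, hx3, hxx⟩ := sg_eq hSsgp h3S hx
      rw [hmem] at hxS hx3 hxx
      rcases hdd with hD | hD <;> omega
    have hnotirr : 2 ≤ h → ¬ nsIrr S := by
      intro hge2 hirr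
      apply hirr
      have hx1S : 3*h+d - 3 ∉ S := by
        rw [hmem]; rcases hdd with hD | hD <;> omega
      refine ⟨S ∪ {3*h+d-3}, S ∪ {3*h+2*d-3}, ?_, ?_, ?_, ?_, ?_⟩
      · refine isNumSgp_union_single hSsgp _ ?_ ?_
        · intro a ha h0; rw [hmem] at *
          rcases hdd with hD | hD <;> omega
        · rw [hmem]; rcases hdd with hD | hD <;> omega
      · refine isNumSgp_union_single hSsgp _ ?_ ?_
        · intro a ha h0; rw [hmem] at *
          rcases hdd with hD | hD <;> omega
        · rw [hmem]; rcases hdd with hD | hD <;> omega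
      · rw [Set.ssubset_iff_of_subset Set.subset_union_left]
        exact ⟨_, Or.inr rfl, hx1S⟩
      · rw [Set.ssubset_iff_of_subset Set.subset_union_left]
        exact ⟨_, Or.inr rfl, hFS⟩
      · ext n
        simp only [Set.mem_inter_iff, Set.mem_union, Set.mem_singleton_iff, hmem]
        rcases hdd with hD | hD <;> omega
    refine ⟨⟨?_, ?_⟩, fun h12 => by omega, fun _ h1 => ⟨hirr1 h1, ?_⟩⟩
    · intro hirr
      by_contra hcon
      exact hnotirr (by omega) hirr
    · rintro (h21 | ⟨_, h1⟩)
      · omega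
      · exact hirr1 h1
    · rw [hFrob, Nat.even_iff]; omega
end

section
/- Let S be a numerical semigroup with multiplicity 3 and Kunz-coordinates vector (x_1, x_2) ∈ ℕ², and suppose S is not irreducible. Then S decomposes minimally into two irreducible numerical semigroups with multiplicity 3 as follows: if x_1 is odd and x_2 even, S = ⟨3, (3x_1+1)/2⟩ ∩ ⟨3, (3x_2+2)/2⟩; if x_1, x_2 are both odd, S = ⟨3, (3x_1+1)/2⟩ ∩ ⟨3, (3x_2+5)/2, 3x_2+2⟩; if x_1, x_2 are both even, S = ⟨3, 3x_1+1, (3x_1+4)/2⟩ ∩ ⟨3, (3x_2+2)/2⟩; if x_1 is even and x_2 odd, S = ⟨3, 3x_1+1, (3x_1+4)/2⟩ ∩ ⟨3, (3x_2+5)/2, 3x_2+2⟩. -/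
/-- A decomposition of S into two irreducible numerical semigroups with
multiplicity 3. -/
def isIrrDecomp3 (S A B : Set ℕ) : Prop :=
  S = A ∩ B ∧ IsNumSgp A ∧ nsIrr A ∧ nsMult A = 3 ∧
    IsNumSgp B ∧ nsIrr B ∧ nsMult B = 3

/-! ### Auxiliary development -/

/-- Threshold set: the set of naturals that are ≡0 mod 3, or ≡1 mod 3 and ≥ a,
or ≡2 mod 3 and ≥ b. -/
def Tset (a b : ℕ) : Set ℕ :=
  {n | n % 3 = 0 ∨ (n % 3 = 1 ∧ a ≤ n) ∨ (n % 3 = 2 ∧ b ≤ n)}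

lemma mem_Tset {a b n : ℕ} :
    n ∈ Tset a b ↔ (n % 3 = 0 ∨ (n % 3 = 1 ∧ a ≤ n) ∨ (n % 3 = 2 ∧ b ≤ n)) := Iff.rfl

lemma Tset_nsg {a b : ℕ} (ha : a % 3 = 1) (hb : b % 3 = 2)
    (hba : b ≤ 2 * a) (hab : a ≤ 2 * b) : IsNumSgp (Tset a b) := by
  refine ⟨by simp [mem_Tset], ?_, ?_⟩
  · intro x hx y hy
    simp only [mem_Tset] at *
    omega
  · apply Set.Finite.subset (Set.finite_Iio (a + b + 1))
    intro n hn
    simp only [Set.mem_compl_iff, mem_Tset] at hn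
    simp only [Set.mem_Iio]
    omega

lemma Tset_mult {a b : ℕ} (ha : 4 ≤ a) (hb : 5 ≤ b) : nsMult (Tset a b) = 3 := by
  have h3 : 3 ∈ {n | n ∈ Tset a b ∧ 0 < n} := ⟨Or.inl rfl, by norm_num⟩
  refine le_antisymm (Nat.sInf_le h3) (le_csInf ⟨3, h3⟩ ?_)
  rintro n ⟨hnT, hnp⟩
  simp only [mem_Tset] at hnT
  omega

lemma mult3_mem_closure {s : Set ℕ} (h3 : (3:ℕ) ∈ s) (k : ℕ) :
    3 * k ∈ AddSubmonoid.closure s := by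
  induction k with
  | zero => simpa using (AddSubmonoid.closure s).zero_mem
  | succ k ih =>
      have h : 3 * (k + 1) = 3 * k + 3 := by ring
      rw [h]
      exact AddSubmonoid.add_mem _ ih (AddSubmonoid.subset_closure h3)

lemma nsGen_eq_Tset {a b : ℕ} (ha : a % 3 = 1) (hb : b % 3 = 2)
    (hba : b ≤ 2 * a) (hab : a ≤ 2 * b) :
    nsGen {3, a, b} = Tset a b := by
  apply Set.Subset.antisymm
  · intro n hn
    replace hn : n ∈ AddSubmonoid.closure ({3, a, b} : Set ℕ) := hn
    induction hn using AddSubmonoid.closure_induction with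
    | mem x hx =>
        simp only [Set.mem_insert_iff, Set.mem_singleton_iff] at hx
        rcases hx with rfl | rfl | rfl <;> exact mem_Tset.2 (by omega)
    | zero => exact mem_Tset.2 (by omega)
    | add x y _ _ hx hy =>
        rw [mem_Tset] at hx hy ⊢
        omega
  · intro n hn
    rcases (mem_Tset.1 hn) with h0 | ⟨h1', hle⟩ | ⟨h2', hle⟩
    · have : n = 3 * (n / 3) := by omega
      rw [this]
      exact mult3_mem_closure (by simp) _
    · obtain ⟨k, hk⟩ : ∃ k, n = a + 3 * k := ⟨(n - a) / 3, by omega⟩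
      rw [hk]
      exact AddSubmonoid.add_mem _
        (AddSubmonoid.subset_closure (by simp)) (mult3_mem_closure (by simp) _)
    · obtain ⟨k, hk⟩ : ∃ k, n = b + 3 * k := ⟨(n - b) / 3, by omega⟩
      rw [hk]
      exact AddSubmonoid.add_mem _
        (AddSubmonoid.subset_closure (by simp)) (mult3_mem_closure (by simp) _)

lemma nsGen_pair_aux (c : ℕ) :
    nsGen {3, c} = nsGen {3, 2 * c, c} := by
  unfold nsGen
  apply le_antisymm
  · apply AddSubmonoid.closure_le.2
    intro x hx
    simp only [Set.mem_insert_iff, Set.mem_singleton_iff] at hx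
    rcases hx with rfl | rfl <;> exact AddSubmonoid.subset_closure (by simp)
  · apply AddSubmonoid.closure_le.2
    intro x hx
    simp only [Set.mem_insert_iff, Set.mem_singleton_iff] at hx
    rcases hx with rfl | rfl | rfl
    · exact AddSubmonoid.subset_closure (by simp)
    · have : 2 * c = c + c := by ring
      rw [this]
      exact AddSubmonoid.add_mem _ (AddSubmonoid.subset_closure (by simp))
        (AddSubmonoid.subset_closure (by simp))
    · exact AddSubmonoid.subset_closure (by simp)

lemma nsGen_pair2 (c : ℕ) (hc : c % 3 = 2) :
    nsGen {3, c} = Tset (2 * c) c := by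
  rw [nsGen_pair_aux]
  exact nsGen_eq_Tset (by omega) hc (by omega) (by omega)

lemma nsGen_pair_aux1 (c : ℕ) :
    nsGen {3, c} = nsGen {3, c, 2 * c} := by
  unfold nsGen
  apply le_antisymm
  · apply AddSubmonoid.closure_le.2
    intro x hx
    simp only [Set.mem_insert_iff, Set.mem_singleton_iff] at hx
    rcases hx with rfl | rfl <;> exact AddSubmonoid.subset_closure (by simp)
  · apply AddSubmonoid.closure_le.2
    intro x hx
    simp only [Set.mem_insert_iff, Set.mem_singleton_iff] at hx
    rcases hx with rfl | rfl | rfl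
    · exact AddSubmonoid.subset_closure (by simp)
    · exact AddSubmonoid.subset_closure (by simp)
    · have : 2 * c = c + c := by ring
      rw [this]
      exact AddSubmonoid.add_mem _ (AddSubmonoid.subset_closure (by simp))
        (AddSubmonoid.subset_closure (by simp))

lemma nsGen_pair1 (c : ℕ) (hc : c % 3 = 1) :
    nsGen {3, c} = Tset c (2 * c) := by
  rw [nsGen_pair_aux1]
  exact nsGen_eq_Tset hc (by omega) (by omega) (by omega)

/-- properties of special gaps -/
lemma sg_props {T : Set ℕ} (h0 : 0 ∈ T) (h3 : (3:ℕ) ∈ T) {g : ℕ} (hg : g ∈ nsSG T) :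
    g ∉ T ∧ g + 3 ∈ T ∧ g + g ∈ T := by
  obtain ⟨hgT, _, hcl, _⟩ := hg
  have hgm : g ∈ T ∪ {g} := Set.mem_union_right _ rfl
  refine ⟨hgT, ?_, ?_⟩
  · have h := hcl g hgm 3 (Set.mem_union_left _ h3)
    rcases h with h | h
    · exact h
    · exfalso
      have : g + 3 = g := h
      omega
  · have h := hcl g hgm g hgm
    rcases h with h | h
    · exact h
    · exfalso
      have hg0 : g + g = g := h
      have : g = 0 := by omega
      exact hgT (this ▸ h0)

lemma irr_of_uniqueSG {T : Set ℕ} (hT : IsNumSgp T)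
    (huniq : ∀ g₁ ∈ nsSG T, ∀ g₂ ∈ nsSG T, g₁ = g₂) : nsIrr T := by
  rintro ⟨T₁, T₂, h₁, h₂, hs₁, hs₂, heq⟩
  have key : ∀ (T' : Set ℕ), IsNumSgp T' → T ⊂ T' → ∃ g, g ∈ nsSG T ∧ g ∈ T' := by
    intro T' hT' hsub
    have hne : (T' \ T).Nonempty := by
      obtain ⟨x, hx, hxn⟩ := Set.exists_of_ssubset hsub
      exact ⟨x, hx, hxn⟩
    have hfin : (T' \ T).Finite := hT.2.2.subset (fun x hx => hx.2)
    obtain ⟨g, hgmem, hgmax⟩ := Set.Finite.exists_maximalFor id _ hfin hne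
    have hmax : ∀ x ∈ T' \ T, x ≤ g := by
      intro x hx
      rcases le_or_gt x g with h | h
      · exact h
      · exact (hgmax hx (le_of_lt h)).ge
    have hg0 : g ≠ 0 := by
      intro h
      exact hgmem.2 (h ▸ hT.1)
    refine ⟨g, ⟨hgmem.2, ?_⟩, hgmem.1⟩
    refine ⟨Or.inl hT.1, ?_, hT.2.2.subset ?_⟩
    · intro x hx y hy
      have hsum : ∀ u v : ℕ, u ∈ T ∪ {g} → v ∈ T ∪ {g} → u + v ∈ T' := by
        intro u v hu hv
        have hu' : u ∈ T' := by
          rcases hu with hu | hu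
          · exact hsub.1 hu
          · exact hu ▸ hgmem.1
        have hv' : v ∈ T' := by
          rcases hv with hv | hv
          · exact hsub.1 hv
          · exact hv ▸ hgmem.1
        exact hT'.2.1 u hu' v hv'
      rcases hx with hx | hx
      · rcases hy with hy | hy
        · exact Or.inl (hT.2.1 x hx y hy)
        · -- y = g
          have hy' : y = g := hy
          by_cases hx0 : x = 0
          · subst hx0; right; simpa using hy
          · left
            by_contra hxyT
            have hle := hmax (x + y) ⟨hsum x y (Or.inl hx) (Or.inr hy), hxyT⟩
            omega
      · have hx' : x = g := hx
        rcases hy with hy | hy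
        · by_cases hy0 : y = 0
          · subst hy0; right; simpa using hx
          · left
            by_contra hxyT
            have hle := hmax (x + y) ⟨hsum x y (Or.inr hx) (Or.inl hy), hxyT⟩
            omega
        · have hy' : y = g := hy
          left
          by_contra hxyT
          have hle := hmax (x + y) ⟨hsum x y (Or.inr hx) (Or.inr hy), hxyT⟩
          omega
    · intro x hx
      simp only [Set.mem_compl_iff, Set.mem_union] at hx ⊢
      exact fun h => hx (Or.inl h)
  obtain ⟨g₁, hg₁, hg₁'⟩ := key T₁ h₁ hs₁
  obtain ⟨g₂, hg₂, hg₂'⟩ := key T₂ h₂ hs₂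
  have hgg := huniq g₁ hg₁ g₂ hg₂
  subst hgg
  exact hg₁.1 (heq ▸ Set.mem_inter hg₁' hg₂')

lemma uniqSG_Tset {a b : ℕ} (ha : a % 3 = 1) (hb : b % 3 = 2)
    (hcond : 2 * a < b + 6 ∨ 2 * b < a + 6) :
    ∀ g₁ ∈ nsSG (Tset a b), ∀ g₂ ∈ nsSG (Tset a b), g₁ = g₂ := by
  have h0 : (0:ℕ) ∈ Tset a b := Or.inl rfl
  have h3 : (3:ℕ) ∈ Tset a b := Or.inl rfl
  intro g₁ hg₁ g₂ hg₂
  obtain ⟨n1, p1, q1⟩ := sg_props h0 h3 hg₁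
  obtain ⟨n2, p2, q2⟩ := sg_props h0 h3 hg₂
  simp only [mem_Tset] at n1 p1 q1 n2 p2 q2
  omega

lemma Tset_good {a b : ℕ} (ha : a % 3 = 1) (hb : b % 3 = 2)
    (hba : b ≤ 2 * a) (hab : a ≤ 2 * b) (ha4 : 4 ≤ a) (hb5 : 5 ≤ b)
    (hcond : 2 * a < b + 6 ∨ 2 * b < a + 6) :
    IsNumSgp (Tset a b) ∧ nsIrr (Tset a b) ∧ nsMult (Tset a b) = 3 :=
  ⟨Tset_nsg ha hb hba hab,
   irr_of_uniqueSG (Tset_nsg ha hb hba hab) (uniqSG_Tset ha hb hcond),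
   Tset_mult ha4 hb5⟩

lemma big_mem {S : Set ℕ} (hS : IsNumSgp S) : ∃ N, ∀ n, N ≤ n → n ∈ S := by
  obtain ⟨N, hN⟩ := hS.2.2.bddAbove
  refine ⟨N + 1, fun n hn => ?_⟩
  by_contra h
  have := hN h
  omega

lemma S_char {S : Set ℕ} (hS : IsNumSgp S) (hm : nsMult S = 3) :
    S = Tset (nsApery S 3 1) (nsApery S 3 2) ∧
    (nsApery S 3 1) % 3 = 1 ∧ (nsApery S 3 2) % 3 = 2 ∧
    4 ≤ nsApery S 3 1 ∧ 5 ≤ nsApery S 3 2 ∧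
    nsApery S 3 2 ≤ 2 * nsApery S 3 1 ∧ nsApery S 3 1 ≤ 2 * nsApery S 3 2 := by
  obtain ⟨N, hN⟩ := big_mem hS
  have hne : {n | n ∈ S ∧ 0 < n}.Nonempty := ⟨N + 1, hN _ (by omega), by omega⟩
  have h3S : 3 ∈ S := by
    have h := Nat.sInf_mem hne
    unfold nsMult at hm
    rw [hm] at h
    exact h.1
  have hlow : ∀ n ∈ S, 0 < n → 3 ≤ n := by
    intro n hn hp
    have := Nat.sInf_le (show n ∈ {n | n ∈ S ∧ 0 < n} from ⟨hn, hp⟩)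
    unfold nsMult at hm
    omega
  have hne1 : {s | s ∈ S ∧ s % 3 = 1 % 3}.Nonempty := ⟨3 * N + 1, hN _ (by omega), by omega⟩
  have hne2 : {s | s ∈ S ∧ s % 3 = 2 % 3}.Nonempty := ⟨3 * N + 2, hN _ (by omega), by omega⟩
  have hA1 := Nat.sInf_mem hne1
  have hA2 := Nat.sInf_mem hne2
  set A1 := nsApery S 3 1 with hA1def
  set A2 := nsApery S 3 2 with hA2def
  have hA1' : A1 ∈ S ∧ A1 % 3 = 1 % 3 := hA1
  have hA2' : A2 ∈ S ∧ A2 % 3 = 2 % 3 := hA2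
  have hA1S : A1 ∈ S := hA1'.1
  have hA2S : A2 ∈ S := hA2'.1
  have hA1m : A1 % 3 = 1 := by have := hA1'.2; omega
  have hA2m : A2 % 3 = 2 := by have := hA2'.2; omega
  have min1 : ∀ s ∈ S, s % 3 = 1 → A1 ≤ s := by
    intro s hs h
    exact Nat.sInf_le ⟨hs, by omega⟩
  have min2 : ∀ s ∈ S, s % 3 = 2 → A2 ≤ s := by
    intro s hs h
    exact Nat.sInf_le ⟨hs, by omega⟩
  have hA1ge : 4 ≤ A1 := by
    have := hlow A1 hA1S (by omega)
    omega
  have hA2ge : 5 ≤ A2 := by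
    have := hlow A2 hA2S (by omega)
    omega
  have add3 : ∀ k s, s ∈ S → s + 3 * k ∈ S := by
    intro k
    induction k with
    | zero => intro s hs; simpa using hs
    | succ k ih =>
        intro s hs
        have h' := hS.2.1 _ (ih s hs) 3 h3S
        have he : s + 3 * (k + 1) = s + 3 * k + 3 := by ring
        rw [he]
        exact h'
  have hba : A2 ≤ 2 * A1 := by
    have := min2 (A1 + A1) (hS.2.1 _ hA1S _ hA1S) (by omega)
    omega
  have hab : A1 ≤ 2 * A2 := by
    have := min1 (A2 + A2) (hS.2.1 _ hA2S _ hA2S) (by omega)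
    omega
  refine ⟨?_, hA1m, hA2m, hA1ge, hA2ge, hba, hab⟩
  ext n
  constructor
  · intro hn
    show n % 3 = 0 ∨ _
    by_cases h0 : n % 3 = 0
    · exact Or.inl h0
    by_cases h1 : n % 3 = 1
    · exact Or.inr (Or.inl ⟨h1, min1 n hn h1⟩)
    · have h2 : n % 3 = 2 := by omega
      exact Or.inr (Or.inr ⟨h2, min2 n hn h2⟩)
  · intro hn
    rcases (mem_Tset.1 hn) with h0 | ⟨h1', hle⟩ | ⟨h2', hle⟩
    · have he : n = 0 + 3 * (n / 3) := by omega
      rw [he]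
      exact add3 _ _ hS.1
    · obtain ⟨k, hk⟩ : ∃ k, n = A1 + 3 * k := ⟨(n - A1) / 3, by omega⟩
      rw [hk]
      exact add3 _ _ hA1S
    · obtain ⟨k, hk⟩ : ∃ k, n = A2 + 3 * k := ⟨(n - A2) / 3, by omega⟩
      rw [hk]
      exact add3 _ _ hA2S
lemma mk_decomp {S A B : Set ℕ} (h : S = A ∩ B)
    (h1 : IsNumSgp A) (h2 : nsIrr A) (h3 : nsMult A = 3)
    (h4 : IsNumSgp B) (h5 : nsIrr B) (h6 : nsMult B = 3) :
    isIrrDecomp3 S A B := ⟨h, h1, h2, h3, h4, h5, h6⟩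


/-- explicit minimal decomposition of a non-irreducible
numerical semigroup of multiplicity 3 into two irreducible numerical
semigroups of multiplicity 3, according to the parities of the Kunz
coordinates. -/
theorem stmt10 (S : Set ℕ) (x1 x2 : ℕ) (hS : IsNumSgp S) (hm : nsMult S = 3)
    (h1 : nsApery S 3 1 = 3 * x1 + 1) (h2 : nsApery S 3 2 = 3 * x2 + 2)
    (hni : ¬ nsIrr S) :
    (Odd x1 → Even x2 →
      isIrrDecomp3 S (nsGen {3, (3 * x1 + 1) / 2}) (nsGen {3, (3 * x2 + 2) / 2})) ∧
    (Odd x1 → Odd x2 →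
      isIrrDecomp3 S (nsGen {3, (3 * x1 + 1) / 2})
        (nsGen {3, (3 * x2 + 5) / 2, 3 * x2 + 2})) ∧
    (Even x1 → Even x2 →
      isIrrDecomp3 S (nsGen {3, 3 * x1 + 1, (3 * x1 + 4) / 2})
        (nsGen {3, (3 * x2 + 2) / 2})) ∧
    (Even x1 → Odd x2 →
      isIrrDecomp3 S (nsGen {3, 3 * x1 + 1, (3 * x1 + 4) / 2})
        (nsGen {3, (3 * x2 + 5) / 2, 3 * x2 + 2})) := by
  obtain ⟨hSeq, ha1m, ha2m, hA1ge, hA2ge, hba, hab⟩ := S_char hS hm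
  rw [h1, h2] at hSeq hba hab
  rw [h1] at ha1m hA1ge
  rw [h2] at ha2m hA2ge
  rw [hSeq] at hni
  have hcon : ¬ (2 * (3 * x1 + 1) < (3 * x2 + 2) + 6 ∨
      2 * (3 * x2 + 2) < (3 * x1 + 1) + 6) := by
    intro hc
    exact hni (irr_of_uniqueSG (Tset_nsg ha1m ha2m hba hab) (uniqSG_Tset ha1m ha2m hc))
  have hb1 : x2 + 2 ≤ 2 * x1 := by omega
  have hb2 : x1 + 1 ≤ 2 * x2 := by omega
  refine ⟨?_, ?_, ?_, ?_⟩
  · -- x1 odd, x2 even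
    rintro ⟨j, hj⟩ ⟨k, hk⟩
    have e1 : (3 * x1 + 1) / 2 = 3 * j + 2 := by omega
    have e2 : (3 * x2 + 2) / 2 = 3 * k + 1 := by omega
    rw [e1, e2, nsGen_pair2 _ (by omega), nsGen_pair1 _ (by omega)]
    obtain ⟨g1a, g1b, g1c⟩ := Tset_good (a := 2 * (3 * j + 2)) (b := 3 * j + 2)
      (by omega) (by omega) (by omega) (by omega) (by omega) (by omega) (by omega)
    obtain ⟨g2a, g2b, g2c⟩ := Tset_good (a := 3 * k + 1) (b := 2 * (3 * k + 1))
      (by omega) (by omega) (by omega) (by omega) (by omega) (by omega) (by omega)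
    refine mk_decomp ?_ g1a g1b g1c g2a g2b g2c
    rw [hSeq]
    ext n
    simp only [Set.mem_inter_iff, mem_Tset]
    omega
  · -- x1 odd, x2 odd
    rintro ⟨j, hj⟩ ⟨k, hk⟩
    have e1 : (3 * x1 + 1) / 2 = 3 * j + 2 := by omega
    have e2 : (3 * x2 + 5) / 2 = 3 * k + 4 := by omega
    have e3 : 3 * x2 + 2 = 6 * k + 5 := by omega
    rw [e1, e2, e3, nsGen_pair2 _ (by omega),
      nsGen_eq_Tset (by omega) (by omega) (by omega) (by omega)]
    obtain ⟨g1a, g1b, g1c⟩ := Tset_good (a := 2 * (3 * j + 2)) (b := 3 * j + 2)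
      (by omega) (by omega) (by omega) (by omega) (by omega) (by omega) (by omega)
    obtain ⟨g2a, g2b, g2c⟩ := Tset_good (a := 3 * k + 4) (b := 6 * k + 5)
      (by omega) (by omega) (by omega) (by omega) (by omega) (by omega) (by omega)
    refine mk_decomp ?_ g1a g1b g1c g2a g2b g2c
    rw [hSeq]
    ext n
    simp only [Set.mem_inter_iff, mem_Tset]
    omega
  · -- x1 even, x2 even
    rintro ⟨j, hj⟩ ⟨k, hk⟩
    have e1 : 3 * x1 + 1 = 6 * j + 1 := by omega
    have e2 : (3 * x1 + 4) / 2 = 3 * j + 2 := by omega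
    have e3 : (3 * x2 + 2) / 2 = 3 * k + 1 := by omega
    rw [e1, e2, e3, nsGen_eq_Tset (by omega) (by omega) (by omega) (by omega),
      nsGen_pair1 _ (by omega)]
    obtain ⟨g1a, g1b, g1c⟩ := Tset_good (a := 6 * j + 1) (b := 3 * j + 2)
      (by omega) (by omega) (by omega) (by omega) (by omega) (by omega) (by omega)
    obtain ⟨g2a, g2b, g2c⟩ := Tset_good (a := 3 * k + 1) (b := 2 * (3 * k + 1))
      (by omega) (by omega) (by omega) (by omega) (by omega) (by omega) (by omega)
    refine mk_decomp ?_ g1a g1b g1c g2a g2b g2c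
    rw [hSeq]
    ext n
    simp only [Set.mem_inter_iff, mem_Tset]
    omega
  · -- x1 even, x2 odd
    rintro ⟨j, hj⟩ ⟨k, hk⟩
    have e1 : 3 * x1 + 1 = 6 * j + 1 := by omega
    have e2 : (3 * x1 + 4) / 2 = 3 * j + 2 := by omega
    have e3 : (3 * x2 + 5) / 2 = 3 * k + 4 := by omega
    have e4 : 3 * x2 + 2 = 6 * k + 5 := by omega
    rw [e1, e2, e3, e4, nsGen_eq_Tset (by omega) (by omega) (by omega) (by omega),
      nsGen_eq_Tset (by omega) (by omega) (by omega) (by omega)]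
    obtain ⟨g1a, g1b, g1c⟩ := Tset_good (a := 6 * j + 1) (b := 3 * j + 2)
      (by omega) (by omega) (by omega) (by omega) (by omega) (by omega) (by omega)
    obtain ⟨g2a, g2b, g2c⟩ := Tset_good (a := 3 * k + 4) (b := 6 * k + 5)
      (by omega) (by omega) (by omega) (by omega) (by omega) (by omega) (by omega)
    refine mk_decomp ?_ g1a g1b g1c g2a g2b g2c
    rw [hSeq]
    ext n
    simp only [Set.mem_inter_iff, mem_Tset]
    omega
end

section
/- Let S be a numerical semigroup with multiplicity 3 and Kunz-coordinates vector (x_1, x_2). Then S is an intersection of pseudosymmetric numerical semigroups with multiplicity 3 if and only if either S is 3-pseudosymmetric, or S is not 3-irreducible with x_1 even and x_2 odd. -/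
/-! Auxiliary development -/

def SgValid (a b : ℕ) : Prop := 1 ≤ a ∧ 1 ≤ b ∧ b ≤ 2*a ∧ a ≤ 2*b+1

def Sg (a b : ℕ) : Set ℕ :=
  {n | n % 3 = 0 ∨ (n % 3 = 1 ∧ 3*a+1 ≤ n) ∨ (n % 3 = 2 ∧ 3*b+2 ≤ n)}

lemma mem_Sg {a b n : ℕ} :
    n ∈ Sg a b ↔ (n % 3 = 0 ∨ (n % 3 = 1 ∧ 3*a+1 ≤ n) ∨ (n % 3 = 2 ∧ 3*b+2 ≤ n)) :=
  Iff.rfl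

lemma Sg_isNumSgp {a b : ℕ} (h : SgValid a b) : IsNumSgp (Sg a b) := by
  obtain ⟨h1, h2, h3, h4⟩ := h
  refine ⟨by simp [mem_Sg], ?_, ?_⟩
  · intro m hm n hn; simp only [mem_Sg] at *; omega
  · apply Set.Finite.subset (Set.finite_Iio (3*a+3*b+3))
    intro n hn
    simp only [Set.mem_compl_iff, mem_Sg] at hn
    simp only [Set.mem_Iio]; omega

lemma Sg_mult {a b : ℕ} (h : SgValid a b) : nsMult (Sg a b) = 3 := by
  obtain ⟨h1, h2, h3, h4⟩ := h
  have h3m : 3 ∈ {n | n ∈ Sg a b ∧ 0 < n} := ⟨by simp [mem_Sg], by norm_num⟩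
  have hmem := Nat.sInf_mem ⟨3, h3m⟩
  have hle := Nat.sInf_le h3m
  obtain ⟨hm1, hm2⟩ := hmem
  rw [mem_Sg] at hm1
  unfold nsMult
  omega

lemma Sg_frob {a b : ℕ} (h : SgValid a b) :
    nsFrob (Sg a b) = if a ≤ b then 3*b-1 else 3*a-2 := by
  obtain ⟨h1, h2, h3, h4⟩ := h
  have hg : IsGreatest (Sg a b)ᶜ (if a ≤ b then 3*b-1 else 3*a-2) := by
    constructor
    · simp only [Set.mem_compl_iff, mem_Sg]; split_ifs <;> omega
    · intro n hn
      simp only [Set.mem_compl_iff, mem_Sg] at hn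
      split_ifs <;> omega
  exact hg.csSup_eq

lemma Sg_compl_nonempty {a b : ℕ} (h : SgValid a b) : ((Sg a b)ᶜ).Nonempty := by
  obtain ⟨h1, h2, h3, h4⟩ := h
  exact ⟨1, by simp only [Set.mem_compl_iff, mem_Sg]; omega⟩

lemma irr_of_pairing {S : Set ℕ} (hS : IsNumSgp S) (hne : (Sᶜ).Nonempty)
    (hp : ∀ g, g ∉ S → 2*g = nsFrob S ∨ (nsFrob S - g ∈ S ∧ g ≤ nsFrob S)) :
    nsIrr S := by
  rintro ⟨T1, T2, hT1, hT2, hs1, hs2, heq⟩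
  have hfin := hS.2.2
  have hF : nsFrob S ∉ S := (Nat.sSup_mem hne hfin.bddAbove : nsFrob S ∈ Sᶜ)
  have key : ∀ T : Set ℕ, IsNumSgp T → S ⊂ T → nsFrob S ∈ T := by
    intro T hT hs
    obtain ⟨x, hxT, hxS⟩ := Set.exists_of_ssubset hs
    rcases hp x hxS with h | ⟨h, hle⟩
    · have hx2 := hT.2.1 x hxT x hxT
      rwa [show x + x = 2*x by ring, h] at hx2
    · have hmem : nsFrob S - x ∈ T := hs.subset h
      have hx2 := hT.2.1 x hxT _ hmem
      rwa [show x + (nsFrob S - x) = nsFrob S by omega] at hx2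
  have hin : nsFrob S ∈ T1 ∩ T2 := ⟨key T1 hT1 hs1, key T2 hT2 hs2⟩
  rw [← heq] at hin
  exact hF hin

lemma Sg_pairing {a b : ℕ} (h : SgValid a b) (hl : b+1 = 2*a ∨ a = 2*b) :
    ∀ g, g ∉ Sg a b →
      2*g = nsFrob (Sg a b) ∨ (nsFrob (Sg a b) - g ∈ Sg a b ∧ g ≤ nsFrob (Sg a b)) := by
  intro g hg
  rw [Sg_frob h]
  obtain ⟨h1, h2, h3, h4⟩ := h
  simp only [mem_Sg] at hg ⊢
  split_ifs with hab <;> omega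

lemma Sg_subset {a b p q : ℕ} (hsub : Sg a b ⊆ Sg p q) : p ≤ a ∧ q ≤ b := by
  have e1 := hsub (show 3*a+1 ∈ Sg a b by simp only [mem_Sg]; omega)
  have e2 := hsub (show 3*b+2 ∈ Sg a b by simp only [mem_Sg]; omega)
  simp only [mem_Sg] at e1 e2; omega

lemma Sg_inj {a b p q : ℕ} (h : Sg a b = Sg p q) : a = p ∧ b = q := by
  have k1 := Sg_subset h.subset
  have k2 := Sg_subset h.symm.subset
  omega

lemma Sg_inter (p1 q1 p2 q2 : ℕ) :
    Sg p1 q1 ∩ Sg p2 q2 = Sg (max p1 p2) (max q1 q2) := by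
  ext n; simp only [Set.mem_inter_iff, mem_Sg]; omega

lemma Sg_pseudoSym {a b : ℕ} (h : SgValid a b) :
    nsPseudoSym (Sg a b) ↔ (b+1 = 2*a ∨ a = 2*b) := by
  have hv := h
  obtain ⟨h1, h2, h3, h4⟩ := hv
  constructor
  · rintro ⟨hirr, heven⟩
    rw [Sg_frob h, Nat.even_iff] at heven
    by_contra hline
    have heven' : (a ≤ b ∧ b % 2 = 1) ∨ (¬ a ≤ b ∧ a % 2 = 0) := by
      by_cases hab : a ≤ b
      · rw [if_pos hab] at heven; left; exact ⟨hab, by omega⟩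
      · rw [if_neg hab] at heven; right; exact ⟨hab, by omega⟩
    have hreg : 2 ≤ a ∧ 2 ≤ b ∧ b+2 ≤ 2*a ∧ a+1 ≤ 2*b := by
      rcases heven' with ⟨hab, hb⟩ | ⟨hab, ha⟩ <;> omega
    apply hirr
    refine ⟨Sg (a-1) b, Sg a (b-1),
      Sg_isNumSgp ⟨by omega, by omega, by omega, by omega⟩,
      Sg_isNumSgp ⟨by omega, by omega, by omega, by omega⟩, ?_, ?_, ?_⟩
    · rw [Set.ssubset_iff_of_subset (by intro n; simp only [mem_Sg]; omega)]
      exact ⟨3*(a-1)+1, by simp only [mem_Sg]; omega, by simp only [mem_Sg]; omega⟩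
    · rw [Set.ssubset_iff_of_subset (by intro n; simp only [mem_Sg]; omega)]
      exact ⟨3*(b-1)+2, by simp only [mem_Sg]; omega, by simp only [mem_Sg]; omega⟩
    · ext n; simp only [Set.mem_inter_iff, mem_Sg]; omega
  · intro hl
    refine ⟨irr_of_pairing (Sg_isNumSgp h) (Sg_compl_nonempty h) (Sg_pairing h hl), ?_⟩
    by_cases hab : a ≤ b
    · rw [Sg_frob h, if_pos hab, Nat.even_iff]; omega
    · rw [Sg_frob h, if_neg hab, Nat.even_iff]; omega

lemma exists_coords {S : Set ℕ} (hS : IsNumSgp S) (hm : nsMult S = 3) :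
    ∃ a b, SgValid a b ∧ S = Sg a b ∧ nsApery S 3 1 = 3*a+1 ∧ nsApery S 3 2 = 3*b+2 := by
  obtain ⟨h0, hadd, hfin⟩ := hS
  have hSinf : S.Infinite := by
    have := hfin.infinite_compl
    rwa [compl_compl] at this
  have hMne : {n | n ∈ S ∧ 0 < n}.Nonempty := by
    by_contra hemp
    rw [Set.not_nonempty_iff_eq_empty] at hemp
    apply hSinf
    apply Set.Finite.subset (Set.finite_singleton 0)
    intro n hn
    simp only [Set.mem_singleton_iff]
    by_contra hne
    have hmm : n ∈ {n | n ∈ S ∧ 0 < n} := ⟨hn, Nat.pos_of_ne_zero hne⟩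
    rw [hemp] at hmm; exact hmm
  have h3S : 3 ∈ S ∧ (1:ℕ) ∉ S ∧ (2:ℕ) ∉ S := by
    have hmem := Nat.sInf_mem hMne
    rw [show sInf {n | n ∈ S ∧ 0 < n} = nsMult S from rfl, hm] at hmem
    refine ⟨hmem.1, fun hx => ?_, fun hx => ?_⟩
    · have hle := Nat.sInf_le (show 1 ∈ {n | n ∈ S ∧ 0 < n} from ⟨hx, one_pos⟩)
      rw [show sInf {n | n ∈ S ∧ 0 < n} = nsMult S from rfl, hm] at hle; omega
    · have hle := Nat.sInf_le (show 2 ∈ {n | n ∈ S ∧ 0 < n} from ⟨hx, by norm_num⟩)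
      rw [show sInf {n | n ∈ S ∧ 0 < n} = nsMult S from rfl, hm] at hle; omega
  have hres : ∀ r : ℕ, {s | s ∈ S ∧ s % 3 = r % 3}.Nonempty := by
    intro r
    by_contra hemp
    rw [Set.not_nonempty_iff_eq_empty] at hemp
    have hsub : Set.range (fun k => 3*k + r % 3) ⊆ Sᶜ := by
      rintro _ ⟨k, rfl⟩
      intro hmem
      have hmm : (3*k + r % 3) ∈ {s | s ∈ S ∧ s % 3 = r % 3} := ⟨hmem, by omega⟩
      rw [hemp] at hmm; exact hmm
    have hinf : (Set.range (fun k => 3*k + r % 3)).Infinite :=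
      Set.infinite_range_of_injective (fun x y hxy => by simpa using by omega)
    exact hinf (hfin.subset hsub)
  have hmul3 : ∀ k, 3*k ∈ S := by
    intro k
    induction k with
    | zero => simpa using h0
    | succ n ih =>
      have := hadd (3*n) ih 3 h3S.1
      rwa [show 3*n+3 = 3*(n+1) by ring] at this
  have hstep : ∀ u, u ∈ S → ∀ k, u + 3*k ∈ S := by
    intro u hu k
    induction k with
    | zero => simpa using hu
    | succ n ih =>
      have := hadd _ ih 3 h3S.1
      rwa [show u+3*n+3 = u+3*(n+1) by ring] at this
  have hu1 := Nat.sInf_mem (hres 1)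
  have hu2 := Nat.sInf_mem (hres 2)
  set u1 := sInf {s | s ∈ S ∧ s % 3 = 1 % 3} with hu1def
  set u2 := sInf {s | s ∈ S ∧ s % 3 = 2 % 3} with hu2def
  obtain ⟨hu1S, hu1m⟩ := hu1
  obtain ⟨hu2S, hu2m⟩ := hu2
  obtain ⟨a, ha⟩ : ∃ a, u1 = 3*a+1 := ⟨u1/3, by omega⟩
  obtain ⟨b, hb⟩ : ∃ b, u2 = 3*b+2 := ⟨u2/3, by omega⟩
  have hane : u1 ≠ 1 := fun hx => h3S.2.1 (hx ▸ hu1S)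
  have hbne : u2 ≠ 2 := fun hx => h3S.2.2 (hx ▸ hu2S)
  have hba : 3*b+2 ≤ 6*a+2 := by
    have hs := hadd u1 hu1S u1 hu1S
    have := Nat.sInf_le (show u1+u1 ∈ {s | s ∈ S ∧ s % 3 = 2 % 3} from ⟨hs, by omega⟩)
    rw [← hu2def] at this
    omega
  have hab : 3*a+1 ≤ 6*b+4 := by
    have hs := hadd u2 hu2S u2 hu2S
    have := Nat.sInf_le (show u2+u2 ∈ {s | s ∈ S ∧ s % 3 = 1 % 3} from ⟨hs, by omega⟩)
    rw [← hu1def] at this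
    omega
  refine ⟨a, b, ⟨by omega, by omega, by omega, by omega⟩, ?_, by
      rw [show nsApery S 3 1 = u1 from rfl]; omega, by
      rw [show nsApery S 3 2 = u2 from rfl]; omega⟩
  ext n
  simp only [mem_Sg]
  constructor
  · intro hn
    rcases (show n % 3 = 0 ∨ n % 3 = 1 ∨ n % 3 = 2 by omega) with h | h | h
    · exact Or.inl h
    · refine Or.inr (Or.inl ⟨h, ?_⟩)
      have := Nat.sInf_le (show n ∈ {s | s ∈ S ∧ s % 3 = 1 % 3} from ⟨hn, by omega⟩)
      rw [← hu1def] at this; omega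
    · refine Or.inr (Or.inr ⟨h, ?_⟩)
      have := Nat.sInf_le (show n ∈ {s | s ∈ S ∧ s % 3 = 2 % 3} from ⟨hn, by omega⟩)
      rw [← hu2def] at this; omega
  · rintro (h | ⟨h, hle⟩ | ⟨h, hle⟩)
    · obtain ⟨k, rfl⟩ : ∃ k, n = 3*k := ⟨n/3, by omega⟩
      exact hmul3 k
    · obtain ⟨k, hk⟩ : ∃ k, n = u1 + 3*k := ⟨(n - u1)/3, by omega⟩
      rw [hk]; exact hstep _ hu1S k
    · obtain ⟨k, hk⟩ : ∃ k, n = u2 + 3*k := ⟨(n - u2)/3, by omega⟩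
      rw [hk]; exact hstep _ hu2S k

lemma Sg_not_mirr {a b : ℕ} (h : SgValid a b) :
    ¬ nsMIrr 3 (Sg a b) ↔ (2 ≤ a ∧ 2 ≤ b ∧ a+1 ≤ 2*b ∧ b+2 ≤ 2*a) := by
  have hv := h
  obtain ⟨h1, h2, h3, h4⟩ := hv
  constructor
  · intro hn
    rw [nsMIrr, not_not] at hn
    obtain ⟨T1, T2, hT1, hT2, hm1, hm2, hs1, hs2, heq⟩ := hn
    obtain ⟨p1, q1, hv1, rfl, -, -⟩ := exists_coords hT1 hm1
    obtain ⟨p2, q2, hv2, rfl, -, -⟩ := exists_coords hT2 hm2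
    have hle1 := Sg_subset hs1.subset
    have hle2 := Sg_subset hs2.subset
    have hne1 : ¬(p1 = a ∧ q1 = b) := by
      rintro ⟨rfl, rfl⟩; exact hs1.ne rfl
    have hne2 : ¬(p2 = a ∧ q2 = b) := by
      rintro ⟨rfl, rfl⟩; exact hs2.ne rfl
    rw [Sg_inter] at heq
    have hmax := Sg_inj heq
    obtain ⟨hv1a, hv1b, hv1c, hv1d⟩ := hv1
    obtain ⟨hv2a, hv2b, hv2c, hv2d⟩ := hv2
    omega
  · intro hreg
    rw [nsMIrr, not_not]
    refine ⟨Sg (a-1) b, Sg a (b-1),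
      Sg_isNumSgp ⟨by omega, by omega, by omega, by omega⟩,
      Sg_isNumSgp ⟨by omega, by omega, by omega, by omega⟩,
      Sg_mult ⟨by omega, by omega, by omega, by omega⟩,
      Sg_mult ⟨by omega, by omega, by omega, by omega⟩, ?_, ?_, ?_⟩
    · rw [Set.ssubset_iff_of_subset (by intro n; simp only [mem_Sg]; omega)]
      exact ⟨3*(a-1)+1, by simp only [mem_Sg]; omega, by simp only [mem_Sg]; omega⟩
    · rw [Set.ssubset_iff_of_subset (by intro n; simp only [mem_Sg]; omega)]
      exact ⟨3*(b-1)+2, by simp only [mem_Sg]; omega, by simp only [mem_Sg]; omega⟩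
    · ext n; simp only [Set.mem_inter_iff, mem_Sg]; omega

lemma rhs_iff {a b : ℕ} (h : SgValid a b) :
    (nsMPseudoSym 3 (Sg a b) ∨ (¬ nsMIrr 3 (Sg a b) ∧ Even a ∧ Odd b)) ↔
    ((b+1 = 2*a ∨ a = 2*b) ∨ (a % 2 = 0 ∧ b % 2 = 1 ∧ b+3 ≤ 2*a ∧ a+2 ≤ 2*b)) := by
  have hv := h
  obtain ⟨h1, h2, h3, h4⟩ := hv
  have hmir := Sg_not_mirr h
  have hfrob := Sg_frob h
  unfold nsMPseudoSym
  rw [hfrob, Nat.even_iff, Nat.odd_iff]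
  constructor
  · rintro (⟨hmi, hev⟩ | ⟨hnmi, hea, hob⟩)
    · have hni : ¬(2 ≤ a ∧ 2 ≤ b ∧ a+1 ≤ 2*b ∧ b+2 ≤ 2*a) :=
        fun hr => (hmir.mpr hr) hmi
      by_cases hab : a ≤ b
      · rw [if_pos hab] at hev; omega
      · rw [if_neg hab] at hev; omega
    · have hr := hmir.mp hnmi
      rw [Nat.even_iff] at hea
      omega
  · rintro (hline | hreg)
    · refine Or.inl ⟨?_, ?_⟩
      · by_contra hc
        exact (by omega : ¬(2 ≤ a ∧ 2 ≤ b ∧ a+1 ≤ 2*b ∧ b+2 ≤ 2*a)) (hmir.mp hc)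
      · by_cases hab : a ≤ b
        · rw [if_pos hab]; omega
        · rw [if_neg hab]; omega
    · exact Or.inr ⟨hmir.mpr (by omega), by rw [Nat.even_iff]; omega, by omega⟩


/-- S of multiplicity 3 is an intersection of pseudosymmetric
numerical semigroups with multiplicity 3 iff S is 3-pseudosymmetric, or S is
not 3-irreducible with x1 even and x2 odd. -/
theorem stmt13 (S : Set ℕ) (x1 x2 : ℕ) (hS : IsNumSgp S) (hm : nsMult S = 3)
    (h1 : nsApery S 3 1 = 3 * x1 + 1) (h2 : nsApery S 3 2 = 3 * x2 + 2) :
    (∃ F : Set (Set ℕ), F.Nonempty ∧ F.Finite ∧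
        (∀ T ∈ F, IsNumSgp T ∧ nsMult T = 3 ∧ nsPseudoSym T) ∧ S = ⋂₀ F) ↔
      (nsMPseudoSym 3 S ∨ (¬ nsMIrr 3 S ∧ Even x1 ∧ Odd x2)) := by
  obtain ⟨a, b, hv, hSeq, ha1, ha2⟩ := exists_coords hS hm
  have hax : a = x1 := by rw [h1] at ha1; omega
  have hbx : b = x2 := by rw [h2] at ha2; omega
  subst hax hbx hSeq
  rw [rhs_iff hv]
  have hv' := hv
  obtain ⟨hv1, hv2, hv3, hv4⟩ := hv'
  constructor
  · rintro ⟨F, hFne, hFfin, hprop, hinter⟩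
    have hkey : ∀ T ∈ F, ∃ c d, SgValid c d ∧ T = Sg c d ∧
        (d+1 = 2*c ∨ c = 2*d) ∧ c ≤ a ∧ d ≤ b := by
      intro T hT
      obtain ⟨hTs, hTm, hTp⟩ := hprop T hT
      obtain ⟨c, d, hvcd, rfl, -, -⟩ := exists_coords hTs hTm
      have hline := (Sg_pseudoSym hvcd).mp hTp
      have hsub : Sg a b ⊆ Sg c d := by
        rw [hinter]; exact Set.sInter_subset_of_mem hT
      have hcd := Sg_subset hsub
      exact ⟨c, d, hvcd, rfl, hline, hcd.1, hcd.2⟩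
    have hnot1 : (3*a-2) ∉ Sg a b := by simp only [mem_Sg]; omega
    have hnot2 : (3*b-1) ∉ Sg a b := by simp only [mem_Sg]; omega
    have hex1 : ∃ T ∈ F, 3*a-2 ∉ T := by
      by_contra hcon
      push_neg at hcon
      exact hnot1 (by rw [hinter]; exact Set.mem_sInter.mpr hcon)
    have hex2 : ∃ T ∈ F, 3*b-1 ∉ T := by
      by_contra hcon
      push_neg at hcon
      exact hnot2 (by rw [hinter]; exact Set.mem_sInter.mpr hcon)
    obtain ⟨Ta, hTaF, hTa⟩ := hex1
    obtain ⟨c1, d1, hvc1, rfl, hl1, hc1, hd1⟩ := hkey Ta hTaF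
    obtain ⟨Tb, hTbF, hTb⟩ := hex2
    obtain ⟨c2, d2, hvc2, rfl, hl2, hc2, hd2⟩ := hkey Tb hTbF
    simp only [mem_Sg] at hTa hTb
    obtain ⟨hva, hvb, hvc, hvd⟩ := hvc1
    obtain ⟨hwa, hwb, hwc, hwd⟩ := hvc2
    omega
  · rintro (hline | ⟨hpa, hpb, hr1, hr2⟩)
    · refine ⟨{Sg a b}, ⟨_, rfl⟩, Set.finite_singleton _, ?_, (Set.sInter_singleton _).symm⟩
      intro T hT
      rw [Set.mem_singleton_iff] at hT
      subst hT
      exact ⟨Sg_isNumSgp hv, Sg_mult hv, (Sg_pseudoSym hv).mpr hline⟩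
    · obtain ⟨t, hbt⟩ : ∃ t, b+1 = 2*t := ⟨(b+1)/2, by omega⟩
      obtain ⟨s, has⟩ : ∃ s, a = 2*s := ⟨a/2, by omega⟩
      have hvt : SgValid t b := ⟨by omega, by omega, by omega, by omega⟩
      have hvs : SgValid a s := ⟨by omega, by omega, by omega, by omega⟩
      refine ⟨{Sg t b, Sg a s}, ⟨_, Or.inl rfl⟩, Set.toFinite _, ?_, ?_⟩
      · intro T hT
        simp only [Set.mem_insert_iff, Set.mem_singleton_iff] at hT
        rcases hT with rfl | rfl
        · exact ⟨Sg_isNumSgp hvt, Sg_mult hvt, (Sg_pseudoSym hvt).mpr (Or.inl hbt)⟩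
        · exact ⟨Sg_isNumSgp hvs, Sg_mult hvs, (Sg_pseudoSym hvs).mpr (Or.inr has)⟩
      · rw [Set.sInter_pair, Sg_inter, max_eq_right (by omega : t ≤ a),
          max_eq_left (by omega : s ≤ b)]
end
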